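/- arXiv:1510.04998 — 5 statements merged into one kernel-verified Lean document; each statement's English description precedes it below -/
import Mathlib

section
/- Let K_B ⊆ cl D be a compact set that is norming for O(cl D) and contained in every compact set norming for O(cl D). Then for every a ∈ I₀ one has {a} × 𝕋 ⊆ K_B; consequently I × 𝕋 ⊆ K_B. -/
open Set Complex

noncomputable section

/-- The bounded Hartogs domain `D ⊂ ℂ²` from the paper. -/
def domD : Set (ℂ × ℂ) :=
  {p | ∃ r φ : ℝ, 1 / 2 < r ∧ r < 1 ∧ 0 < φ ∧ φ < 2 * Real.pi ∧
    p.1 = (r : ℂ) * Complex.exp (φ * Complex.I) ∧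
    (φ ≤ Real.pi / 2 → ‖p.2‖ < 1) ∧
    (Real.pi / 2 < φ → φ < 3 * Real.pi / 2 → ‖p.2‖ < 3) ∧
    (3 * Real.pi / 2 ≤ φ → 2 < ‖p.2‖ ∧ ‖p.2‖ < 3)}

/-- `K` is norming for the family `F` of functions on `closure S`. -/
def IsNorming {E : Type*} [TopologicalSpace E] (S K : Set E) (F : Set (E → ℂ)) : Prop :=
  ∀ f ∈ F, sSup ((fun p => ‖f p‖) '' K) =
    sSup ((fun p => ‖f p‖) '' closure S)

/-- `O(cl S)`: functions extending holomorphically to an open neighborhood of `closure S`. -/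
def Ocl {E : Type*} [NormedAddCommGroup E] [NormedSpace ℂ E] (S : Set E) :
    Set (E → ℂ) :=
  {f | ∃ U : Set E, IsOpen U ∧ closure S ⊆ U ∧ DifferentiableOn ℂ f U}

/-- `A(S)`: functions continuous on `closure S` and holomorphic on `S`. -/
def Acl {E : Type*} [NormedAddCommGroup E] [NormedSpace ℂ E] (S : Set E) :
    Set (E → ℂ) :=
  {f | ContinuousOn f (closure S) ∧ DifferentiableOn ℂ f S}

/-- `K` is the minimal compact norming set for the family `F` on `closure S`
(i.e. the Shilov-type boundary associated with `F`). -/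
def IsShilovFor {E : Type*} [NormedAddCommGroup E] [NormedSpace ℂ E]
    (S : Set E) (F : Set (E → ℂ)) (K : Set E) : Prop :=
  IsCompact K ∧ K ⊆ closure S ∧ IsNorming S K F ∧
    ∀ K' : Set E, IsCompact K' → K' ⊆ closure S → IsNorming S K' F → K ⊆ K'

namespace HartogsAux

open Real (pi)

/-- rotation lemma -/
lemma arg_rot (c : ℝ) {z : ℂ} (hz : z ≠ 0) (h : z.arg + c ∈ Set.Ioc (-Real.pi) Real.pi) :
    (Complex.exp (c * I) * z).arg = z.arg + c := by
  have h1 : Complex.exp (c * I) * z = (‖z‖ : ℂ) * Complex.exp (((z.arg + c : ℝ)) * I) := by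
    conv_lhs => rw [← Complex.norm_mul_exp_arg_mul_I z]
    rw [Complex.ofReal_add, mul_comm (Complex.exp _), mul_assoc, ← Complex.exp_add]
    ring_nf
  rw [h1, Complex.arg_real_mul _ (norm_pos_iff.mpr hz), Complex.exp_mul_I,
    Complex.arg_cos_add_sin_mul_I h]

/-- the sets -/
def E1 : Set (ℂ × ℂ) :=
  {p | 1/2 ≤ ‖p.1‖ ∧ ‖p.1‖ ≤ 1 ∧ 0 ≤ p.1.re ∧ 0 ≤ p.1.im ∧
    ‖p.2‖ ≤ 1}

def E2 : Set (ℂ × ℂ) :=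
  {p | 1/2 ≤ ‖p.1‖ ∧ ‖p.1‖ ≤ 1 ∧ p.1.re ≤ 0 ∧ ‖p.2‖ ≤ 3}

def E3 : Set (ℂ × ℂ) :=
  {p | 1/2 ≤ ‖p.1‖ ∧ ‖p.1‖ ≤ 1 ∧ 0 ≤ p.1.re ∧ p.1.im ≤ 0 ∧
    2 ≤ ‖p.2‖ ∧ ‖p.2‖ ≤ 3}

def EE : Set (ℂ × ℂ) := E1 ∪ E2 ∪ E3

def U1 : Set (ℂ × ℂ) :=
  {p | 1/4 < ‖p.1‖ ∧ |(Complex.exp (-(Real.pi/4) * I) * p.1).arg| < 3*Real.pi/8 ∧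
    ‖p.2‖ < 3/2}

def U2 : Set (ℂ × ℂ) :=
  {p | 1/4 < ‖p.1‖ ∧ |(Complex.exp (Real.pi * I) * p.1).arg| < 5*Real.pi/8 ∧
    ‖p.2‖ < 4}

def U3 : Set (ℂ × ℂ) :=
  {p | 1/4 < ‖p.1‖ ∧ |(Complex.exp ((Real.pi/4) * I) * p.1).arg| < 3*Real.pi/8 ∧
    3/2 < ‖p.2‖ ∧ ‖p.2‖ < 4}

def CC (p : ℂ × ℂ) : Prop :=
  ‖p.2‖ < 3/2 ∧ |(Complex.exp (-(Real.pi/4) * I) * p.1).arg| < 3*Real.pi/8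

instance : DecidablePred CC := fun _ => Classical.dec _

def LL (p : ℂ × ℂ) : ℂ :=
  if CC p then Complex.log p.1
  else Complex.log (Complex.exp ((7*Real.pi/8) * I) * p.1) + (9*Real.pi/8 : ℝ) * I

def ff (a : ℝ) (w₀ : ℂ) (T : ℝ) (p : ℂ × ℂ) : ℂ :=
  p.2 * Complex.exp ((T : ℂ) * I * LL p + (p.2 * (starRingEnd ℂ) w₀ - 1) - (p.1 - (a : ℂ))^2)

lemma pi8_pos : (0:ℝ) < Real.pi/8 := by positivity

lemma abs_ne_zero' {z : ℂ} (h : 1/4 < ‖z‖) : z ≠ 0 := by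
  intro h0; simp [h0] at h; linarith

/-- From the C-window, `arg z ∈ (-π/8, 5π/8)`. -/
lemma arg_of_window {z : ℂ} (hz : z ≠ 0)
    (h : |(Complex.exp (-(Real.pi/4) * I) * z).arg| < 3*Real.pi/8) :
    -(Real.pi/8) < z.arg ∧ z.arg < 5*Real.pi/8 := by
  set u := Complex.exp (-(Real.pi/4) * I) * z with hu
  have hune : u ≠ 0 := mul_ne_zero (Complex.exp_ne_zero _) hz
  have habs : |u.arg| < 3*Real.pi/8 := h
  have h1 : -(3*Real.pi/8) < u.arg ∧ u.arg < 3*Real.pi/8 := abs_lt.mp habs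
  have hpi := Real.pi_pos
  have harg0 := arg_rot (Real.pi/4) hune
    ⟨by linarith [h1.1], by linarith [h1.2]⟩
  have hzz : Complex.exp (((Real.pi/4 : ℝ) : ℂ) * I) * u = z := by
    rw [hu, ← mul_assoc, ← Complex.exp_add,
      show (((Real.pi/4 : ℝ) : ℂ)) * I + -(Real.pi/4) * I = 0 by push_cast; ring,
      Complex.exp_zero, one_mul]
  rw [hzz] at harg0
  constructor <;> [linarith [h1.1]; linarith [h1.2]]

/-- branch equality: for `π/8 < arg z`, the two logs agree. -/
lemma branch_eq {z : ℂ} (hz : z ≠ 0) (h : Real.pi/8 < z.arg) :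
    Complex.log (Complex.exp ((7*Real.pi/8) * I) * z) + (9*Real.pi/8 : ℝ) * I
      = Complex.log z := by
  have hpi := Real.pi_pos
  have hle := Complex.arg_le_pi z
  have h1 : Complex.exp ((7*Real.pi/8) * I) * z
      = Complex.exp (Complex.log z - ((9*Real.pi/8 : ℝ) : ℂ) * I) := by
    conv_lhs => rw [← Complex.exp_log hz]
    rw [← Complex.exp_add,
      show (7*(Real.pi:ℂ)/8) * I + Complex.log z
          = (Complex.log z - ((9*Real.pi/8 : ℝ) : ℂ) * I) + 2*Real.pi*I by push_cast; ring,
      Complex.exp_add, Complex.exp_two_pi_mul_I, mul_one]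
  have him : (Complex.log z - ((9*Real.pi/8 : ℝ) : ℂ) * I).im = z.arg - 9*Real.pi/8 := by
    simp [Complex.sub_im, Complex.log_im]
  rw [h1, Complex.log_exp (by rw [him]; linarith) (by rw [him]; linarith)]
  push_cast
  ring

/-- `CC` holds on `E1`. -/
lemma C_on_E1 {p : ℂ × ℂ} (hp : p ∈ E1) : CC p := by
  obtain ⟨h1, h2, h3, h4, h5⟩ := hp
  have hz : p.1 ≠ 0 := by intro h0; rw [h0] at h1; simp at h1; linarith
  have hpi := Real.pi_pos
  have ha1 : 0 ≤ p.1.arg := Complex.arg_nonneg_iff.mpr h4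
  have ha2 : p.1.arg ≤ Real.pi/2 := by
    have := Complex.abs_arg_le_pi_div_two_iff.mpr h3
    exact (abs_le.mp this).2
  have harg := arg_rot (-(Real.pi/4)) hz (z := p.1) ⟨by linarith, by linarith⟩
  rw [show ((-(Real.pi/4) : ℝ) : ℂ) * I = -(Real.pi/4) * I by push_cast; ring] at harg
  refine ⟨by linarith [h5], ?_⟩
  rw [harg, abs_lt]
  constructor <;> linarith

/-- `LL` imaginary part on `E1`. -/
lemma LL_im_E1 {p : ℂ × ℂ} (hp : p ∈ E1) :
    (LL p).im = p.1.arg := by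
  rw [LL, if_pos (C_on_E1 hp), Complex.log_im]

/-- `LL` imaginary part on `E2`. -/
lemma ne_zero_of_E {z : ℂ} (h : 1/2 ≤ ‖z‖) : z ≠ 0 := by
  intro h0; rw [h0] at h; simp at h; linarith

lemma exp98_cancel (z : ℂ) :
    Complex.exp (((9*Real.pi/8 : ℝ) : ℂ) * I) * (Complex.exp ((7*Real.pi/8) * I) * z) = z := by
  rw [← mul_assoc, ← Complex.exp_add,
    show ((9*Real.pi/8 : ℝ) : ℂ) * I + (7*Real.pi/8) * I = 2*Real.pi*I by push_cast; ring,
    Complex.exp_two_pi_mul_I, one_mul]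

lemma LL_im_notC {p : ℂ × ℂ} (h : ¬ CC p) :
    (LL p).im = (Complex.exp ((7*Real.pi/8) * I) * p.1).arg + 9*Real.pi/8 := by
  rw [LL, if_neg h]
  simp [Complex.add_im, Complex.log_im]

lemma LL_im_E2 {p : ℂ × ℂ} (hp : p ∈ E2) : Real.pi/2 ≤ (LL p).im := by
  obtain ⟨h1, h2, h3, h4⟩ := hp
  have hz : p.1 ≠ 0 := ne_zero_of_E h1
  have hpi := Real.pi_pos
  have hre : ¬ (0 < p.1.re ∨ p.1 = 0) := by
    push_neg; exact ⟨by linarith, hz⟩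
  have habs : ¬ |p.1.arg| < Real.pi/2 := fun hc =>
    hre (Complex.abs_arg_lt_pi_div_two_iff.mp hc)
  by_cases hC : CC p
  · have hw := arg_of_window hz hC.2
    rw [LL, if_pos hC, Complex.log_im]
    rcases abs_lt.mpr.mt habs |> not_and_or.mp with h | h
    · push_neg at h; linarith [hw.1]
    · push_neg at h; exact h
  · rw [LL_im_notC hC]
    set u := Complex.exp ((7*Real.pi/8) * I) * p.1 with hu
    have hune : u ≠ 0 := mul_ne_zero (Complex.exp_ne_zero _) hz
    by_contra hcon
    push_neg at hcon
    have hua : u.arg < -(5*Real.pi/8) := by linarith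
    have hlow := Complex.neg_pi_lt_arg u
    have harg := arg_rot (9*Real.pi/8) hune ⟨by linarith, by linarith⟩
    rw [show Complex.exp (((9*Real.pi/8 : ℝ) : ℂ) * I) * u = p.1 from exp98_cancel p.1] at harg
    have : |p.1.arg| < Real.pi/2 := by
      rw [abs_lt]; constructor <;> [linarith; linarith]
    exact habs this

/-- `LL` imaginary part on `E3`. -/
lemma LL_im_E3 {p : ℂ × ℂ} (hp : p ∈ E3) : 3*Real.pi/2 ≤ (LL p).im := by
  obtain ⟨h1, h2, h3, h4, h5, h6⟩ := hp
  have hz : p.1 ≠ 0 := ne_zero_of_E h1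
  have hpi := Real.pi_pos
  have hC : ¬ CC p := fun hC => by linarith [hC.1]
  rw [LL_im_notC hC]
  have ha2 : -(Real.pi/2) ≤ p.1.arg := by
    have := Complex.abs_arg_le_pi_div_two_iff.mpr h3
    linarith [(abs_le.mp this).1]
  have ha1 : p.1.arg ≤ 0 := by
    rcases lt_or_eq_of_le h4 with h | h
    · by_contra hc
      push_neg at hc
      have := Complex.arg_nonneg_iff.mp hc.le
      linarith
    · have : p.1.arg = 0 := Complex.arg_eq_zero_iff.mpr ⟨h3, h⟩
      linarith
  have harg := arg_rot (7*Real.pi/8) hz (z := p.1) ⟨by linarith, by linarith⟩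
  rw [show ((7*Real.pi/8 : ℝ) : ℂ) * I = (7*Real.pi/8) * I by push_cast; ring] at harg
  rw [harg]
  linarith

/-- If `exp((7π/8)I) * z` is on the negative real axis, then `arg z = π/8`. -/
lemma arg_eq_pi8 {z : ℂ} (hz : z ≠ 0)
    (h : (Complex.exp ((7*Real.pi/8) * I) * z).arg = Real.pi) : z.arg = Real.pi/8 := by
  have hpi := Real.pi_pos
  set u := Complex.exp ((7*Real.pi/8) * I) * z with hu
  have hune : u ≠ 0 := mul_ne_zero (Complex.exp_ne_zero _) hz
  have harg := arg_rot (-(7*Real.pi/8)) hune (by rw [h]; constructor <;> [linarith; linarith])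
  have hcan : Complex.exp (((-(7*Real.pi/8) : ℝ) : ℂ) * I) * u = z := by
    rw [hu, ← mul_assoc, ← Complex.exp_add,
      show ((-(7*Real.pi/8) : ℝ) : ℂ) * I + (7*Real.pi/8) * I = 0 by push_cast; ring,
      Complex.exp_zero, one_mul]
  rw [hcan, h] at harg
  rw [harg]; ring

lemma exp_pi_neg_pi : Complex.exp ((Real.pi : ℂ) * I) = Complex.exp (((-Real.pi : ℝ) : ℂ) * I) := by
  rw [show (((-Real.pi : ℝ) : ℂ)) * I = -((Real.pi : ℂ) * I) by push_cast; ring,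
    Complex.exp_neg, Complex.exp_pi_mul_I]
  norm_num

/-- On `U2 ∪ U3`, the rotated point is in the slit plane. -/
lemma slit_U23 {p : ℂ × ℂ} (hp : p ∈ U2 ∪ U3) :
    Complex.exp ((7*Real.pi/8) * I) * p.1 ∈ Complex.slitPlane := by
  have hpi := Real.pi_pos
  have h1 : 1/4 < ‖p.1‖ := by rcases hp with h | h <;> exact h.1
  have hz : p.1 ≠ 0 := abs_ne_zero' h1
  rw [Complex.mem_slitPlane_iff_arg]
  refine ⟨fun hc => ?_, mul_ne_zero (Complex.exp_ne_zero _) hz⟩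
  have h8 : p.1.arg = Real.pi/8 := arg_eq_pi8 hz hc
  rcases hp with h | h
  · have hw := h.2.1
    have harg := arg_rot (-Real.pi) hz (z := p.1) (by rw [h8]; constructor <;> [linarith; linarith])
    rw [← exp_pi_neg_pi] at harg
    rw [harg, h8, abs_lt] at hw
    linarith [hw.1]
  · have hw := h.2.1
    have harg := arg_rot (Real.pi/4) hz (z := p.1) (by rw [h8]; constructor <;> [linarith; linarith])
    rw [show (((Real.pi/4 : ℝ)) : ℂ) * I = (Real.pi/4) * I by push_cast; ring] at harg
    rw [harg, h8, abs_lt] at hw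
    linarith [hw.2]

/-- On `U1`, `p.1` itself is in the slit plane. -/
lemma slit_U1 {p : ℂ × ℂ} (hp : p ∈ U1) : p.1 ∈ Complex.slitPlane := by
  have hpi := Real.pi_pos
  have hz : p.1 ≠ 0 := abs_ne_zero' hp.1
  have hw := arg_of_window hz hp.2.1
  exact Complex.mem_slitPlane_iff_arg.mpr ⟨by intro hc; rw [hc] at hw; linarith [hw.2], hz⟩

def gg1 (a : ℝ) (w₀ : ℂ) (T : ℝ) (p : ℂ × ℂ) : ℂ :=
  p.2 * Complex.exp ((T : ℂ) * I * Complex.log p.1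
    + (p.2 * (starRingEnd ℂ) w₀ - 1) - (p.1 - (a : ℂ))^2)

def gg2 (a : ℝ) (w₀ : ℂ) (T : ℝ) (p : ℂ × ℂ) : ℂ :=
  p.2 * Complex.exp ((T : ℂ) * I *
      (Complex.log (Complex.exp ((7*Real.pi/8) * I) * p.1) + (9*Real.pi/8 : ℝ) * I)
    + (p.2 * (starRingEnd ℂ) w₀ - 1) - (p.1 - (a : ℂ))^2)

lemma ff_eq_gg1_on_U1 {a : ℝ} {w₀ : ℂ} {T : ℝ} {p : ℂ × ℂ} (hp : p ∈ U1) :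
    ff a w₀ T p = gg1 a w₀ T p := by
  have hC : CC p := ⟨hp.2.2, hp.2.1⟩
  rw [ff, gg1, LL, if_pos hC]

lemma ff_eq_gg2_on_U23 {a : ℝ} {w₀ : ℂ} {T : ℝ} {p : ℂ × ℂ} (hp : p ∈ U2 ∪ U3) :
    ff a w₀ T p = gg2 a w₀ T p := by
  have hpi := Real.pi_pos
  by_cases hC : CC p
  · have h1 : 1/4 < ‖p.1‖ := by rcases hp with h | h <;> exact h.1
    have hz : p.1 ≠ 0 := abs_ne_zero' h1
    have hw := arg_of_window hz hC.2
    -- show arg p.1 > 3π/8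
    have hgt : 3*Real.pi/8 < p.1.arg := by
      rcases hp with h | h
      · by_contra hle
        push_neg at hle
        rcases le_or_gt p.1.arg 0 with h0 | h0
        · have harg := arg_rot Real.pi hz (z := p.1)
            ⟨by linarith [hw.1], by linarith⟩
          have hu2 := h.2.1
          rw [show ((Real.pi : ℝ) : ℂ) = (Real.pi : ℂ) by norm_num] at harg
          rw [harg, abs_lt] at hu2
          linarith [hu2.2, hw.1]
        · have harg := arg_rot (-Real.pi) hz (z := p.1)
            ⟨by linarith, by linarith [Real.pi_pos]⟩
          rw [← exp_pi_neg_pi] at harg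
          have hu2 := h.2.1
          rw [harg, abs_lt] at hu2
          linarith [hu2.1]
      · exfalso
        exact absurd hC.1 (by push_neg; linarith [h.2.2.1])
    rw [ff, gg2, LL, if_pos hC, ← branch_eq hz (by linarith)]
  · rw [ff, gg2, LL, if_neg hC]

lemma isOpen_window {ζ : ℂ} (hζ : ζ ≠ 0) {β : ℝ} (hβ : β ≤ Real.pi) :
    IsOpen {z : ℂ | 1/4 < ‖z‖ ∧ |(ζ * z).arg| < β} := by
  rw [isOpen_iff_mem_nhds]
  rintro z ⟨h1, h2⟩
  have hz : z ≠ 0 := abs_ne_zero' h1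
  have hslit : ζ * z ∈ Complex.slitPlane := by
    refine Complex.mem_slitPlane_iff_arg.mpr ⟨fun hc => ?_, mul_ne_zero hζ hz⟩
    rw [hc, abs_of_pos Real.pi_pos] at h2
    linarith
  have hc1 : ContinuousAt (fun w : ℂ => |(ζ * w).arg|) z :=
    continuous_abs.continuousAt.comp
      ((Complex.continuousAt_arg hslit).comp ((continuous_mul_left ζ).continuousAt))
  have n1 : {w : ℂ | 1/4 < ‖w‖} ∈ nhds z :=
    (isOpen_lt continuous_const continuous_norm).mem_nhds h1
  have n2 : {w : ℂ | |(ζ * w).arg| < β} ∈ nhds z :=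
    hc1.preimage_mem_nhds (Iio_mem_nhds h2)
  exact Filter.inter_mem n1 n2

lemma isOpen_U1 : IsOpen U1 := by
  have h : U1 = ((fun p : ℂ × ℂ => p.1) ⁻¹'
      {z : ℂ | 1/4 < ‖z‖ ∧ |(Complex.exp (-(Real.pi/4) * I) * z).arg| < 3*Real.pi/8})
      ∩ ((fun p : ℂ × ℂ => p.2) ⁻¹' {w : ℂ | ‖w‖ < 3/2}) := by
    ext p; simp only [U1, Set.mem_setOf_eq, Set.mem_inter_iff, Set.mem_preimage]; tauto
  rw [h]
  exact (((isOpen_window (Complex.exp_ne_zero _) (by linarith [Real.pi_pos])).preimage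
      continuous_fst)).inter
    ((isOpen_lt (continuous_norm.comp continuous_snd) continuous_const).preimage
      continuous_id)

lemma isOpen_U2 : IsOpen U2 := by
  have h : U2 = ((fun p : ℂ × ℂ => p.1) ⁻¹'
      {z : ℂ | 1/4 < ‖z‖ ∧ |(Complex.exp (Real.pi * I) * z).arg| < 5*Real.pi/8})
      ∩ ((fun p : ℂ × ℂ => p.2) ⁻¹' {w : ℂ | ‖w‖ < 4}) := by
    ext p; simp only [U2, Set.mem_setOf_eq, Set.mem_inter_iff, Set.mem_preimage]; tauto
  rw [h]
  exact ((isOpen_window (Complex.exp_ne_zero _) (by linarith [Real.pi_pos])).preimage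
      continuous_fst).inter
    (isOpen_lt (continuous_norm.comp continuous_snd) continuous_const)

lemma isOpen_U3 : IsOpen U3 := by
  have h : U3 = ((fun p : ℂ × ℂ => p.1) ⁻¹'
      {z : ℂ | 1/4 < ‖z‖ ∧ |(Complex.exp ((Real.pi/4) * I) * z).arg| < 3*Real.pi/8})
      ∩ (((fun p : ℂ × ℂ => p.2) ⁻¹' {w : ℂ | 3/2 < ‖w‖})
        ∩ ((fun p : ℂ × ℂ => p.2) ⁻¹' {w : ℂ | ‖w‖ < 4})) := by
    ext p; simp only [U3, Set.mem_setOf_eq, Set.mem_inter_iff, Set.mem_preimage]; tauto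
  rw [h]
  exact ((isOpen_window (Complex.exp_ne_zero _) (by linarith [Real.pi_pos])).preimage
      continuous_fst).inter
    (((isOpen_lt continuous_const (continuous_norm.comp continuous_snd))).inter
      (isOpen_lt (continuous_norm.comp continuous_snd) continuous_const))

lemma diff_gg1 (a : ℝ) (w₀ : ℂ) (T : ℝ) {p : ℂ × ℂ} (hp : p ∈ U1) :
    DifferentiableAt ℂ (gg1 a w₀ T) p := by
  have hslit := slit_U1 hp
  exact differentiableAt_snd.mul
    (((((differentiableAt_const _).mul (differentiableAt_fst.clog hslit)).add
      ((differentiableAt_snd.mul (differentiableAt_const _)).sub (differentiableAt_const _))).sub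
      ((differentiableAt_fst.sub (differentiableAt_const _)).pow 2)).cexp)

lemma diff_gg2 (a : ℝ) (w₀ : ℂ) (T : ℝ) {p : ℂ × ℂ} (hp : p ∈ U2 ∪ U3) :
    DifferentiableAt ℂ (gg2 a w₀ T) p := by
  have hslit := slit_U23 hp
  exact differentiableAt_snd.mul
    ((((differentiableAt_const _).mul
        ((((differentiableAt_const _).mul differentiableAt_fst).clog hslit).add
          (differentiableAt_const _))).add
      ((differentiableAt_snd.mul (differentiableAt_const _)).sub (differentiableAt_const _))).sub
      ((differentiableAt_fst.sub (differentiableAt_const _)).pow 2)).cexp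

lemma diff_ff (a : ℝ) (w₀ : ℂ) (T : ℝ) :
    DifferentiableOn ℂ (ff a w₀ T) (U1 ∪ (U2 ∪ U3)) := by
  intro p hp
  rcases hp with h | h
  · have : DifferentiableAt ℂ (ff a w₀ T) p :=
      (diff_gg1 a w₀ T h).congr_of_eventuallyEq
        (Filter.eventuallyEq_of_mem (isOpen_U1.mem_nhds h) fun q hq => ff_eq_gg1_on_U1 hq)
    exact this.differentiableWithinAt
  · have : DifferentiableAt ℂ (ff a w₀ T) p :=
      (diff_gg2 a w₀ T h).congr_of_eventuallyEq
        (Filter.eventuallyEq_of_mem ((isOpen_U2.union isOpen_U3).mem_nhds h)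
          fun q hq => ff_eq_gg2_on_U23 hq)
    exact this.differentiableWithinAt

lemma domD_subset_EE : domD ⊆ EE := by
  rintro ⟨z, w⟩ ⟨r, φ, hr1, hr2, hφ1, hφ2, hz0, hw1, hw2, hw3⟩
  have hz : z = ↑r * Complex.exp (↑φ * I) := hz0
  have hpi := Real.pi_pos
  have habs : ‖z‖ = r := by
    rw [hz, norm_mul, Complex.norm_real, Real.norm_eq_abs, Complex.norm_exp]
    simp [abs_of_pos (by linarith : (0:ℝ) < r)]
  have hre : z.re = r * Real.cos φ := by
    rw [hz, Complex.re_ofReal_mul, Complex.exp_ofReal_mul_I_re]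
  have him : z.im = r * Real.sin φ := by
    rw [hz, Complex.im_ofReal_mul, Complex.exp_ofReal_mul_I_im]
  have hr0 : (0:ℝ) ≤ r := by linarith
  by_cases h1 : φ ≤ Real.pi/2
  · left; left
    refine ⟨by rw [habs]; linarith, by rw [habs]; linarith, ?_, ?_, le_of_lt (hw1 h1)⟩
    · rw [hre]
      exact mul_nonneg hr0 (Real.cos_nonneg_of_mem_Icc ⟨by linarith, h1⟩)
    · rw [him]
      exact mul_nonneg hr0 (Real.sin_nonneg_of_nonneg_of_le_pi (le_of_lt hφ1) (by linarith))
  · push_neg at h1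
    by_cases h2 : φ < 3*Real.pi/2
    · left; right
      refine ⟨by rw [habs]; linarith, by rw [habs]; linarith, ?_, le_of_lt (hw2 h1 h2)⟩
      rw [hre]
      exact mul_nonpos_of_nonneg_of_nonpos hr0
        (Real.cos_nonpos_of_pi_div_two_le_of_le (by linarith) (by linarith))
    · push_neg at h2
      right
      obtain ⟨hwa, hwb⟩ := hw3 (by linarith)
      refine ⟨by rw [habs]; linarith, by rw [habs]; linarith, ?_, ?_, le_of_lt hwa, le_of_lt hwb⟩
      · rw [hre, ← Real.cos_sub_two_pi]
        exact mul_nonneg hr0 (Real.cos_nonneg_of_mem_Icc ⟨by linarith, by linarith⟩)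
      · rw [him, ← Real.sin_sub_two_pi]
        exact mul_nonpos_of_nonneg_of_nonpos hr0
          (Real.sin_nonpos_of_nonpos_of_neg_pi_le (by linarith) (by linarith))

lemma isClosed_EE : IsClosed EE := by
  have c1 : Continuous fun p : ℂ × ℂ => ‖p.1‖ :=
    continuous_norm.comp continuous_fst
  have c2 : Continuous fun p : ℂ × ℂ => ‖p.2‖ :=
    continuous_norm.comp continuous_snd
  have cre : Continuous fun p : ℂ × ℂ => p.1.re := Complex.continuous_re.comp continuous_fst
  have cim : Continuous fun p : ℂ × ℂ => p.1.im := Complex.continuous_im.comp continuous_fst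
  have h1 : IsClosed E1 := by
    rw [show E1 = {p : ℂ × ℂ | 1/2 ≤ ‖p.1‖} ∩ ({p | ‖p.1‖ ≤ 1} ∩
      ({p | 0 ≤ p.1.re} ∩ ({p | 0 ≤ p.1.im} ∩ {p | ‖p.2‖ ≤ 1}))) by
        ext p; simp only [E1, Set.mem_setOf_eq, Set.mem_inter_iff]]
    exact (isClosed_le continuous_const c1).inter ((isClosed_le c1 continuous_const).inter
      ((isClosed_le continuous_const cre).inter ((isClosed_le continuous_const cim).inter
        (isClosed_le c2 continuous_const))))
  have h2 : IsClosed E2 := by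
    rw [show E2 = {p : ℂ × ℂ | 1/2 ≤ ‖p.1‖} ∩ ({p | ‖p.1‖ ≤ 1} ∩
      ({p | p.1.re ≤ 0} ∩ {p | ‖p.2‖ ≤ 3})) by
        ext p; simp only [E2, Set.mem_setOf_eq, Set.mem_inter_iff]]
    exact (isClosed_le continuous_const c1).inter ((isClosed_le c1 continuous_const).inter
      ((isClosed_le cre continuous_const).inter (isClosed_le c2 continuous_const)))
  have h3 : IsClosed E3 := by
    rw [show E3 = {p : ℂ × ℂ | 1/2 ≤ ‖p.1‖} ∩ ({p | ‖p.1‖ ≤ 1} ∩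
      ({p | 0 ≤ p.1.re} ∩ ({p | p.1.im ≤ 0} ∩ ({p | 2 ≤ ‖p.2‖} ∩
        {p | ‖p.2‖ ≤ 3})))) by
        ext p; simp only [E3, Set.mem_setOf_eq, Set.mem_inter_iff]]
    exact (isClosed_le continuous_const c1).inter ((isClosed_le c1 continuous_const).inter
      ((isClosed_le continuous_const cre).inter ((isClosed_le cim continuous_const).inter
        ((isClosed_le continuous_const c2).inter (isClosed_le c2 continuous_const)))))
  exact (h1.union h2).union h3

lemma EE_subset_U : EE ⊆ U1 ∪ (U2 ∪ U3) := by
  rintro p (⟨hp | hp⟩ | hp)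
  · left
    have hC := C_on_E1 hp
    exact ⟨by linarith [hp.1], hC.2, hC.1⟩
  · right; left
    have hpi := Real.pi_pos
    refine ⟨by linarith [hp.1], ?_, by linarith [hp.2.2.2]⟩
    have : Complex.exp ((Real.pi : ℂ) * I) * p.1 = -p.1 := by
      rw [Complex.exp_pi_mul_I]; ring
    rw [this]
    have h := Complex.abs_arg_le_pi_div_two_iff.mpr
      (show 0 ≤ (-p.1).re by simp only [Complex.neg_re]; linarith [hp.2.2.1])
    linarith [h]
  · right; right
    have hpi := Real.pi_pos
    obtain ⟨h1, h2, h3, h4, h5, h6⟩ := hp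
    have hz : p.1 ≠ 0 := ne_zero_of_E h1
    have ha2 : -(Real.pi/2) ≤ p.1.arg := by
      have := Complex.abs_arg_le_pi_div_two_iff.mpr h3
      linarith [(abs_le.mp this).1]
    have ha1 : p.1.arg ≤ 0 := by
      rcases lt_or_eq_of_le h4 with h | h
      · by_contra hc
        push_neg at hc
        have := Complex.arg_nonneg_iff.mp hc.le
        linarith
      · have : p.1.arg = 0 := Complex.arg_eq_zero_iff.mpr ⟨h3, h⟩
        linarith
    have harg := arg_rot (Real.pi/4) hz (z := p.1) ⟨by linarith, by linarith⟩
    rw [show (((Real.pi/4 : ℝ)) : ℂ) * I = (Real.pi/4) * I by push_cast; ring] at harg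
    refine ⟨by linarith, ?_, by linarith, by linarith⟩
    rw [harg, abs_lt]
    constructor <;> linarith

lemma abs_ff (a : ℝ) (w₀ : ℂ) (T : ℝ) (p : ℂ × ℂ) :
    ‖ff a w₀ T p‖ = ‖p.2‖ *
      Real.exp (-(T * (LL p).im) + ((p.2 * (starRingEnd ℂ) w₀).re - 1)
        - ((p.1.re - a)^2 - p.1.im^2)) := by
  rw [ff, norm_mul, Complex.norm_exp]
  congr 2
  simp only [Complex.add_re, Complex.sub_re, Complex.mul_re, Complex.mul_im,
    Complex.ofReal_re, Complex.ofReal_im, Complex.I_re, Complex.I_im, Complex.one_re,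
    Complex.sub_im, Complex.add_im, pow_two]
  ring

lemma ff_val {a : ℝ} (ha : a ∈ Set.Ioo (1/2 : ℝ) 1) {w₀ : ℂ} (hw : ‖w₀‖ = 1)
    (T : ℝ) : ‖ff a w₀ T ((a : ℂ), w₀)‖ = 1 := by
  have hpi := Real.pi_pos
  have ha0 : (0:ℝ) < a := by linarith [ha.1]
  have hz : ((a : ℂ)) ≠ 0 := by
    simpa using ne_of_gt ha0
  have harga : ((a : ℂ)).arg = 0 := Complex.arg_ofReal_of_nonneg ha0.le
  have hC : CC ((a : ℂ), w₀) := by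
    refine ⟨by rw [hw]; norm_num, ?_⟩
    have harg := arg_rot (-(Real.pi/4)) hz (z := (a:ℂ))
      (by rw [harga]; constructor <;> [linarith; linarith])
    rw [show ((-(Real.pi/4) : ℝ) : ℂ) * I = -(Real.pi/4) * I by push_cast; ring] at harg
    rw [harg, harga, abs_lt]
    constructor <;> linarith
  have hLL : (LL ((a : ℂ), w₀)).im = 0 := by
    rw [LL, if_pos hC, Complex.log_im, harga]
  rw [abs_ff, hLL, hw]
  have h1 : (w₀ * (starRingEnd ℂ) w₀).re = 1 := by
    rw [Complex.mul_conj]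
    simp [Complex.normSq_eq_norm_sq, hw]
  rw [h1]
  simp

lemma interp {a t : ℝ} (ha : 1/2 ≤ a) (ha2 : a ≤ 1) (ht : 0 < t) (ht2 : t ≤ 1) :
    1/2 < a + (3/4 - a) * t ∧ a + (3/4 - a) * t < 1 := by
  constructor <;>
    nlinarith [mul_nonneg (by linarith : (0:ℝ) ≤ 1 - t) (by linarith : (0:ℝ) ≤ a - 1/2),
      mul_nonneg (by linarith : (0:ℝ) ≤ 1 - t) (by linarith : (0:ℝ) ≤ 1 - a)]

set_option maxHeartbeats 3200000 in
lemma main_est {a : ℝ} (ha : a ∈ Set.Ioo (1/2:ℝ) 1) {w₀ : ℂ} (hw : ‖w₀‖ = 1)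
    {ε : ℝ} (hε1 : 0 < ε) (hε2 : ε ≤ 1/16) {p : ℂ × ℂ} (hp : p ∈ EE)
    (hd : ε ≤ dist p ((a:ℂ), w₀)) :
    ‖ff a w₀ (8/ε) p‖ ≤ Real.exp (-(ε^2/4)) := by
  have hπ3 : (3:ℝ) < Real.pi := Real.pi_gt_three
  suffices H : ∀ T : ℝ, 128 ≤ T → T * (ε/2) = 4 →
      ‖ff a w₀ T p‖ ≤ Real.exp (-(ε^2/4)) by
    refine H (8/ε) ?_ ?_
    · rw [le_div_iff₀ hε1]; linarith
    · field_simp; norm_num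
  intro T hT128 hT4
  have hT0 : (0:ℝ) < T := by linarith
  have hW0 : 0 ≤ ‖p.2‖ := norm_nonneg _
  have hAW : (p.2 * (starRingEnd ℂ) w₀).re ≤ ‖p.2‖ := by
    calc (p.2 * (starRingEnd ℂ) w₀).re ≤ ‖p.2 * (starRingEnd ℂ) w₀‖ :=
      Complex.re_le_norm _
    _ = ‖p.2‖ := by rw [norm_mul, Complex.norm_conj, hw, mul_one]
  have habs1 : ‖p.1‖ ≤ 1 := by
    rcases hp with (h | h) | h <;> exact h.2.1
  have hy2 : p.1.im^2 ≤ 1 := by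
    nlinarith [Complex.abs_im_le_norm p.1, _root_.sq_abs p.1.im, abs_nonneg p.1.im]
  have hε24 : ε^2/4 ≤ 1 := by nlinarith
  have hsq : (0:ℝ) ≤ (p.1.re - a)^2 := sq_nonneg _
  rw [abs_ff]
  rcases hp with (h | h) | h
  · -- E1
    obtain ⟨e1, e2, e3, e4, e5⟩ := h
    have hz : p.1 ≠ 0 := ne_zero_of_E e1
    have hθeq : (LL p).im = p.1.arg := LL_im_E1 ⟨e1, e2, e3, e4, e5⟩
    rw [hθeq]
    clear hθeq
    have hθ0 : 0 ≤ p.1.arg := Complex.arg_nonneg_iff.mpr e4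
    have hθpi2 : p.1.arg ≤ Real.pi/2 :=
      (abs_le.mp (Complex.abs_arg_le_pi_div_two_iff.mpr e3)).2
    have hA1 : (p.2 * (starRingEnd ℂ) w₀).re ≤ 1 := by linarith
    have hTθ0 : 0 ≤ T * p.1.arg := mul_nonneg hT0.le hθ0
    have hexp : ∀ e' : ℝ,
        -(T * p.1.arg) + ((p.2 * (starRingEnd ℂ) w₀).re - 1)
          - ((p.1.re - a)^2 - p.1.im^2) ≤ e' →
        ‖p.2‖ * Real.exp (-(T * p.1.arg)
          + ((p.2 * (starRingEnd ℂ) w₀).re - 1) - ((p.1.re - a)^2 - p.1.im^2))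
          ≤ Real.exp e' := by
      intro e' hee
      calc ‖p.2‖ * Real.exp (-(T * p.1.arg)
          + ((p.2 * (starRingEnd ℂ) w₀).re - 1) - ((p.1.re - a)^2 - p.1.im^2))
          ≤ 1 * Real.exp (-(T * p.1.arg)
          + ((p.2 * (starRingEnd ℂ) w₀).re - 1) - ((p.1.re - a)^2 - p.1.im^2)) :=
        mul_le_mul_of_nonneg_right e5 (Real.exp_nonneg _)
      _ ≤ Real.exp e' := by rw [one_mul]; exact Real.exp_le_exp.mpr hee
    by_cases hθbig : ε/2 ≤ p.1.arg
    · apply hexp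
      have h5 : T * (ε/2) ≤ T * p.1.arg := mul_le_mul_of_nonneg_left hθbig hT0.le
      linarith
    · push_neg at hθbig
      have hsin0 : 0 ≤ Real.sin p.1.arg :=
        Real.sin_nonneg_of_nonneg_of_le_pi hθ0 (by linarith)
      have hsinle : Real.sin p.1.arg ≤ p.1.arg := by
        rcases eq_or_lt_of_le hθ0 with h0 | h0
        · rw [← h0]; simp
        · exact (Real.sin_lt h0).le
      have hyθ : p.1.im ≤ p.1.arg := by
        have := Complex.norm_mul_sin_arg p.1
        nlinarith [norm_nonneg p.1]
      have hy24 : p.1.im^2 ≤ ε^2/4 := by nlinarith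
      rw [Prod.dist_eq] at hd
      rcases le_max_iff.mp hd with hd1 | hd2
      · -- ε ≤ dist p.1 a
        rw [Complex.dist_eq] at hd1
        have hid : (p.1 - (a:ℂ)).re = p.1.re - a := by simp [Complex.sub_re]
        have hid2 : (p.1 - (a:ℂ)).im = p.1.im := by simp [Complex.sub_im]
        have hnsq : (p.1.re - a)^2 + p.1.im^2 = (‖p.1 - (a:ℂ)‖)^2 := by
          rw [Complex.sq_norm, Complex.normSq_apply, hid, hid2]; ring
        have hxa : ε^2 - p.1.im^2 ≤ (p.1.re - a)^2 := by
          nlinarith [norm_nonneg (p.1 - (a:ℂ))]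
        apply hexp
        linarith [sq_nonneg ε]
      · -- ε ≤ dist p.2 w₀
        rw [Complex.dist_eq] at hd2
        have hns := Complex.normSq_sub p.2 w₀
        have h2A : 2*(p.2 * (starRingEnd ℂ) w₀).re ≤ 2 - ε^2 := by
          have hq : Complex.normSq (p.2 - w₀) = (‖p.2 - w₀‖)^2 :=
            (Complex.sq_norm _).symm
          have hq2 : Complex.normSq p.2 = (‖p.2‖)^2 := (Complex.sq_norm _).symm
          have hq3 : Complex.normSq w₀ = 1 := by
            rw [← Complex.sq_norm, hw]; norm_num
          nlinarith [norm_nonneg (p.2 - w₀)]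
        apply hexp
        linarith [sq_nonneg ε]
  · -- E2
    obtain ⟨θ, hθeq, hθpi⟩ : ∃ θ : ℝ, (LL p).im = θ ∧ Real.pi/2 ≤ θ :=
      ⟨_, rfl, LL_im_E2 h⟩
    rw [hθeq]; clear hθeq
    have hW3 : ‖p.2‖ ≤ 3 := h.2.2.2
    have h3exp : (3:ℝ) ≤ Real.exp 2 := by nlinarith [Real.add_one_le_exp (2:ℝ)]
    have hTθ : T * (Real.pi/2) ≤ T * θ := mul_le_mul_of_nonneg_left hθpi hT0.le
    have h192 : (192:ℝ) ≤ T * (Real.pi/2) := by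
      nlinarith [mul_nonneg (by linarith : (0:ℝ) ≤ T - 128)
        (by linarith : (0:ℝ) ≤ Real.pi/2 - 3/2)]
    calc ‖p.2‖ * Real.exp (-(T * θ)
          + ((p.2 * (starRingEnd ℂ) w₀).re - 1) - ((p.1.re - a)^2 - p.1.im^2))
        ≤ Real.exp 2 * Real.exp (-(T * θ)
          + ((p.2 * (starRingEnd ℂ) w₀).re - 1) - ((p.1.re - a)^2 - p.1.im^2)) := by
          apply mul_le_mul_of_nonneg_right _ (Real.exp_nonneg _); linarith
      _ = Real.exp (2 + (-(T * θ)
          + ((p.2 * (starRingEnd ℂ) w₀).re - 1) - ((p.1.re - a)^2 - p.1.im^2))) :=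
          (Real.exp_add _ _).symm
      _ ≤ Real.exp (-(ε^2/4)) := Real.exp_le_exp.mpr (by linarith)
  · -- E3
    obtain ⟨θ, hθeq, hθpi⟩ : ∃ θ : ℝ, (LL p).im = θ ∧ 3*Real.pi/2 ≤ θ :=
      ⟨_, rfl, LL_im_E3 h⟩
    rw [hθeq]; clear hθeq
    have hθpi' : Real.pi/2 ≤ θ := by linarith [Real.pi_pos]
    have hW3 : ‖p.2‖ ≤ 3 := h.2.2.2.2.2
    have h3exp : (3:ℝ) ≤ Real.exp 2 := by nlinarith [Real.add_one_le_exp (2:ℝ)]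
    have hTθ : T * (Real.pi/2) ≤ T * θ := mul_le_mul_of_nonneg_left hθpi' hT0.le
    have h192 : (192:ℝ) ≤ T * (Real.pi/2) := by
      nlinarith [mul_nonneg (by linarith : (0:ℝ) ≤ T - 128)
        (by linarith : (0:ℝ) ≤ Real.pi/2 - 3/2)]
    calc ‖p.2‖ * Real.exp (-(T * θ)
          + ((p.2 * (starRingEnd ℂ) w₀).re - 1) - ((p.1.re - a)^2 - p.1.im^2))
        ≤ Real.exp 2 * Real.exp (-(T * θ)
          + ((p.2 * (starRingEnd ℂ) w₀).re - 1) - ((p.1.re - a)^2 - p.1.im^2)) := by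
          apply mul_le_mul_of_nonneg_right _ (Real.exp_nonneg _); linarith
      _ = Real.exp (2 + (-(T * θ)
          + ((p.2 * (starRingEnd ℂ) w₀).re - 1) - ((p.1.re - a)^2 - p.1.im^2))) :=
          (Real.exp_add _ _).symm
      _ ≤ Real.exp (-(ε^2/4)) := Real.exp_le_exp.mpr (by linarith)

lemma mem_closure_domD {a : ℝ} (ha : a ∈ Set.Ioo (1/2:ℝ) 1) {w₀ : ℂ}
    (hw : ‖w₀‖ = 1) : ((a:ℂ), w₀) ∈ closure domD := by
  have hπ3 : (3:ℝ) < Real.pi := Real.pi_gt_three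
  set u : ℕ → ℝ := fun n => 1/((n:ℝ)+1) with hu
  have hu0 : ∀ n, 0 < u n := fun n => by positivity
  have hu1 : ∀ n, u n ≤ 1 := fun n => by
    rw [hu]; rw [div_le_one (by positivity)]; simp
  have hmem : ∀ n, (((a:ℂ) * Complex.exp ((u n : ℝ) * I),
      ((1 - u n : ℝ) : ℂ) * w₀) : ℂ × ℂ) ∈ domD := by
    intro n
    refine ⟨a, u n, ha.1, ha.2, hu0 n, by linarith [hu1 n], rfl, ?_, ?_, ?_⟩
    · intro _
      have : ‖((1 - u n : ℝ) : ℂ) * w₀‖ = |1 - u n| := by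
        rw [norm_mul, Complex.norm_real, Real.norm_eq_abs, hw, mul_one]
      rw [this, _root_.abs_of_nonneg (by linarith [hu1 n] : (0:ℝ) ≤ 1 - u n)]
      linarith [hu0 n]
    · intro h _; exfalso; linarith [hu1 n, hπ3]
    · intro h; exfalso; linarith [hu1 n, hπ3]
  have htend0 : Filter.Tendsto u Filter.atTop (nhds 0) :=
    tendsto_one_div_add_atTop_nhds_zero_nat
  have hc1 : Filter.Tendsto (fun n => (a:ℂ) * Complex.exp ((u n : ℝ) * I))
      Filter.atTop (nhds ((a:ℂ))) := by
    have hcont : Continuous fun t : ℝ => (a:ℂ) * Complex.exp ((t:ℂ) * I) := by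
      continuity
    have := (hcont.tendsto 0).comp htend0
    simpa [Function.comp_def] using this
  have hc2 : Filter.Tendsto (fun n => ((1 - u n : ℝ) : ℂ) * w₀)
      Filter.atTop (nhds w₀) := by
    have hcont : Continuous fun t : ℝ => ((1 - t : ℝ) : ℂ) * w₀ := by continuity
    have := (hcont.tendsto 0).comp htend0
    simpa [Function.comp_def] using this
  exact mem_closure_of_tendsto (hc1.prodMk_nhds hc2)
    (Filter.Eventually.of_forall hmem)

lemma compact_closure_domD : IsCompact (closure domD) := by
  have hsub : EE ⊆ Metric.closedBall (0 : ℂ × ℂ) 3 := by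
    intro p hp
    have h1 : ‖p.1‖ ≤ 1 := by rcases hp with (h | h) | h <;> exact h.2.1
    have h2 : ‖p.2‖ ≤ 3 := by
      rcases hp with (h | h) | h
      · linarith [h.2.2.2.2]
      · exact h.2.2.2
      · exact h.2.2.2.2.2
    rw [Metric.mem_closedBall, Prod.dist_eq]
    apply max_le
    · have hq : dist p.1 (0 : ℂ × ℂ).1 = ‖p.1‖ := by
        simp [Complex.dist_eq]
      rw [hq]; linarith
    · have hq : dist p.2 (0 : ℂ × ℂ).2 = ‖p.2‖ := by
        simp [Complex.dist_eq]
      rw [hq]; linarith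
  exact (isCompact_closedBall _ _).of_isClosed_subset isClosed_closure
    (closure_minimal (subset_trans domD_subset_EE hsub) Metric.isClosed_closedBall)

lemma key {K : Set (ℂ × ℂ)} (hKc : IsCompact K) (hKsub : K ⊆ closure domD)
    (hKn : IsNorming domD K (Ocl domD)) {a : ℝ} (ha : a ∈ Set.Ioo (1/2:ℝ) 1) {w₀ : ℂ}
    (hw : ‖w₀‖ = 1) : ((a:ℂ), w₀) ∈ K := by
  have hclE : closure domD ⊆ EE := closure_minimal domD_subset_EE isClosed_EE
  rw [← hKc.isClosed.closure_eq, Metric.mem_closure_iff]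
  intro ε hε
  set ε' := min ε (1/16) with hε'def
  have hε'pos : 0 < ε' := lt_min hε (by norm_num)
  have hε'le : ε' ≤ 1/16 := min_le_right _ _
  set T : ℝ := 8/ε' with hTdef
  set f := ff a w₀ T with hf
  have hfO : f ∈ Ocl domD :=
    ⟨U1 ∪ (U2 ∪ U3), isOpen_U1.union (isOpen_U2.union isOpen_U3),
      subset_trans hclE EE_subset_U, diff_ff a w₀ T⟩
  have hcont : ContinuousOn (fun p => ‖f p‖) (closure domD) :=
    continuous_norm.comp_continuousOn
      (((diff_ff a w₀ T).continuousOn).mono (subset_trans hclE EE_subset_U))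
  have hbdd : BddAbove ((fun p => ‖f p‖) '' closure domD) :=
    (compact_closure_domD.image_of_continuousOn hcont).bddAbove
  have hval : ‖f ((a:ℂ), w₀)‖ = 1 := ff_val ha hw T
  have h1 : 1 ≤ sSup ((fun p => ‖f p‖) '' closure domD) := by
    rw [← hval]
    exact le_csSup hbdd ⟨_, mem_closure_domD ha hw, rfl⟩
  have hnorm := hKn f hfO
  have hKne : K.Nonempty := by
    by_contra hne
    rw [Set.not_nonempty_iff_eq_empty] at hne
    rw [hne, Set.image_empty, Real.sSup_empty] at hnorm
    linarith [hnorm ▸ h1, h1.trans_eq hnorm.symm]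
  obtain ⟨q, hqK, hqmax⟩ := hKc.exists_isMaxOn hKne (hcont.mono hKsub)
  have hbddK : BddAbove ((fun p => ‖f p‖) '' K) := by
    refine ⟨‖f q‖, ?_⟩
    rintro y ⟨x, hx, rfl⟩
    exact hqmax hx
  have hsupK : sSup ((fun p => ‖f p‖) '' K) = ‖f q‖ := by
    apply le_antisymm
    · apply csSup_le (hKne.image _)
      rintro y ⟨x, hx, rfl⟩
      exact hqmax hx
    · exact le_csSup hbddK ⟨q, hqK, rfl⟩
  have hq1 : 1 ≤ ‖f q‖ := by
    rw [← hsupK, hnorm]; exact h1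
  have hqE : q ∈ EE := hclE (hKsub hqK)
  have hdist : dist q ((a:ℂ), w₀) < ε' := by
    by_contra hc
    push_neg at hc
    have hest := main_est ha hw hε'pos hε'le hqE hc
    have hlt : Real.exp (-(ε'^2/4)) < 1 := by
      rw [Real.exp_lt_one_iff]
      nlinarith
    rw [← hf] at hest
    linarith
  exact ⟨q, hqK, by rw [dist_comm]; exact lt_of_lt_of_le hdist (min_le_left _ _)⟩

end HartogsAux

theorem stmt1 (KB : Set (ℂ × ℂ)) (hKB : IsShilovFor domD (Ocl domD) KB) :
    (∀ a : ℝ, a ∈ Ioo (1 / 2 : ℝ) 1 → ∀ w : ℂ, ‖w‖ = 1 → ((a : ℂ), w) ∈ KB) ∧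
    (∀ a : ℝ, a ∈ Icc (1 / 2 : ℝ) 1 → ∀ w : ℂ, ‖w‖ = 1 → ((a : ℂ), w) ∈ KB) := by
  obtain ⟨hKc, hKsub, hKn, _⟩ := hKB
  have part1 : ∀ a : ℝ, a ∈ Ioo (1 / 2 : ℝ) 1 → ∀ w : ℂ, ‖w‖ = 1 →
      ((a : ℂ), w) ∈ KB := by
    intro a ha w hw
    exact HartogsAux.key hKc hKsub hKn (by simpa using ha) hw
  refine ⟨part1, ?_⟩
  intro a ha w hw
  set u : ℕ → ℝ := fun n => 1/((n:ℝ)+1) with hu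
  have hu0 : ∀ n, 0 < u n := fun n => by positivity
  have hu1 : ∀ n, u n ≤ 1 := fun n => by
    rw [hu]; rw [div_le_one (by positivity)]; simp
  set c : ℕ → ℝ := fun n => a + (3/4 - a) * u n with hc
  have hcI : ∀ n, c n ∈ Ioo (1/2 : ℝ) 1 := by
    intro n
    have := HartogsAux.interp ha.1 ha.2 (hu0 n) (hu1 n)
    exact ⟨this.1, this.2⟩
  have hmem : ∀ n, (((c n : ℝ) : ℂ), w) ∈ KB := fun n => part1 (c n) (hcI n) w hw
  have htend0 : Filter.Tendsto u Filter.atTop (nhds 0) :=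
    tendsto_one_div_add_atTop_nhds_zero_nat
  have htendc : Filter.Tendsto (fun n => (((c n : ℝ) : ℂ), w)) Filter.atTop
      (nhds (((a : ℝ) : ℂ), w)) := by
    have hcont : Continuous fun t : ℝ => (((a + (3/4 - a) * t : ℝ) : ℂ), w) := by
      continuity
    have h2 := (hcont.tendsto 0).comp htend0
    simp only [Function.comp_def, mul_zero, add_zero] at h2
    exact h2
  exact hKc.isClosed.mem_of_tendsto htendc (Filter.Eventually.of_forall hmem)
end
end

section
/- For every a ∈ I = [1/2, 1] there exists a function g holomorphic on an open neighborhood of cl D such that g(a, w) = 1 for all w with |w| ≤ 1, and |g(z, w)| < 1 for all (z, w) ∈ cl D \ ({a} × cl 𝔻). -/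
open Set Complex

noncomputable section

/-! ### Auxiliary constructions for `stmt2` -/

/-- The entire function `ψ(μ) = iμ - μ²/16`. -/
def psiA (μ : ℂ) : ℂ := Complex.I * μ - (1/16 : ℂ) * μ^2

/-- A closed superset of `domD`. -/
def EclA : Set (ℂ × ℂ) :=
  {p | 1/2 ≤ ‖p.1‖ ∧ ‖p.1‖ ≤ 1 ∧ ‖p.2‖ ≤ 3 ∧
    (‖p.2‖ ≤ 1 ∨ p.1.re ≤ 0 ∨ p.1.im ≤ 0) ∧
    (‖p.2‖ ≤ 1 ∨ 2 ≤ ‖p.2‖ ∨ p.1.re ≤ 0) ∧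
    (2 ≤ ‖p.2‖ ∨ p.1.re ≤ 0 ∨ 0 ≤ p.1.im)}

def W1A : Set (ℂ × ℂ) :=
  {p | (0 < p.1.im ∨ (0 < p.1.re ∧ -(1/10 : ℝ) < p.1.im)) ∧ ‖p.2‖ < 3/2}
def WbA : Set (ℂ × ℂ) := {p | 1/4 < p.1.im ∧ p.1.re < 1/8}
def W2A : Set (ℂ × ℂ) := {p | p.1.re < 0 ∨ p.1.im < -(1/4 : ℝ)}
def W3A : Set (ℂ × ℂ) :=
  {p | (p.1.im < 0 ∨ (0 < p.1.re ∧ p.1.im < 1/10)) ∧ 3/2 < ‖p.2‖}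

def UA : Set (ℂ × ℂ) := (W1A ∪ WbA) ∪ (W2A ∪ W3A)

open scoped Classical in
/-- The peak function. -/
noncomputable def gA (a : ℝ) : ℂ × ℂ → ℂ := fun p =>
  if p ∈ W1A ∪ WbA then Complex.exp (psiA (Complex.log p.1 - (Real.log a : ℂ)))
  else if p ∈ W2A then
    Complex.exp (psiA (Complex.log (-p.1) + Real.pi * Complex.I - (Real.log a : ℂ)))
  else Complex.exp (psiA (Complex.log p.1 + 2 * Real.pi * Complex.I - (Real.log a : ℂ)))

lemma psiA_re (μ : ℂ) : (psiA μ).re = -μ.im - (μ.re^2 - μ.im^2)/16 := by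
  simp [psiA, Complex.mul_re, Complex.mul_im, pow_two]
  ring

lemma keyA {x y : ℝ} (hy0 : 0 ≤ y) (hy1 : y ≤ 9) (h : x ≠ 0 ∨ y ≠ 0) :
    -y - (x^2 - y^2)/16 < 0 := by
  rcases h with h | h
  · have hx : 0 < x^2 := by positivity
    nlinarith
  · have hy : 0 < y := lt_of_le_of_ne hy0 (Ne.symm h)
    nlinarith [sq_nonneg x]

lemma logNeg_of_im_pos {z : ℂ} (h : 0 < z.im) :
    Complex.log (-z) = Complex.log z - Real.pi * Complex.I := by
  apply Complex.ext
  · simp [Complex.log_re]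
  · simp [Complex.log_im, Complex.arg_neg_eq_arg_sub_pi_of_im_pos h]

lemma logNeg_of_im_neg {z : ℂ} (h : z.im < 0) :
    Complex.log (-z) = Complex.log z + Real.pi * Complex.I := by
  apply Complex.ext
  · simp [Complex.log_re]
  · simp [Complex.log_im, Complex.arg_neg_eq_arg_add_pi_of_im_neg h]

lemma isOpen_W1A : IsOpen W1A := by
  apply IsOpen.inter
  · exact ((isOpen_lt continuous_const (Complex.continuous_im.comp continuous_fst)).union
      ((isOpen_lt continuous_const (Complex.continuous_re.comp continuous_fst)).inter
        (isOpen_lt continuous_const (Complex.continuous_im.comp continuous_fst))))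
  · exact isOpen_lt (continuous_norm.comp continuous_snd) continuous_const

lemma isOpen_WbA : IsOpen WbA :=
  (isOpen_lt continuous_const (Complex.continuous_im.comp continuous_fst)).inter
    (isOpen_lt (Complex.continuous_re.comp continuous_fst) continuous_const)

lemma isOpen_W2A : IsOpen W2A :=
  (isOpen_lt (Complex.continuous_re.comp continuous_fst) continuous_const).union
    (isOpen_lt (Complex.continuous_im.comp continuous_fst) continuous_const)

lemma isOpen_W3A : IsOpen W3A := by
  apply IsOpen.inter
  · exact ((isOpen_lt (Complex.continuous_im.comp continuous_fst) continuous_const).union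
      ((isOpen_lt continuous_const (Complex.continuous_re.comp continuous_fst)).inter
        (isOpen_lt (Complex.continuous_im.comp continuous_fst) continuous_const)))
  · exact isOpen_lt continuous_const (continuous_norm.comp continuous_snd)

lemma isOpen_UA : IsOpen UA :=
  ((isOpen_W1A.union isOpen_WbA).union (isOpen_W2A.union isOpen_W3A))

lemma isClosed_EclA : IsClosed EclA := by
  have hw1 : IsClosed {p : ℂ × ℂ | ‖p.2‖ ≤ 1} :=
    isClosed_le (continuous_norm.comp continuous_snd) continuous_const
  have hw2 : IsClosed {p : ℂ × ℂ | 2 ≤ ‖p.2‖} :=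
    isClosed_le continuous_const (continuous_norm.comp continuous_snd)
  have hre : IsClosed {p : ℂ × ℂ | p.1.re ≤ 0} :=
    isClosed_le (Complex.continuous_re.comp continuous_fst) continuous_const
  have him : IsClosed {p : ℂ × ℂ | p.1.im ≤ 0} :=
    isClosed_le (Complex.continuous_im.comp continuous_fst) continuous_const
  have him' : IsClosed {p : ℂ × ℂ | 0 ≤ p.1.im} :=
    isClosed_le continuous_const (Complex.continuous_im.comp continuous_fst)
  have heq : EclA = ({p : ℂ × ℂ | 1/2 ≤ ‖p.1‖} ∩ {p | ‖p.1‖ ≤ 1} ∩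
      {p | ‖p.2‖ ≤ 3} ∩
      ({p : ℂ × ℂ | ‖p.2‖ ≤ 1} ∪ ({p | p.1.re ≤ 0} ∪ {p | p.1.im ≤ 0})) ∩
      ({p : ℂ × ℂ | ‖p.2‖ ≤ 1} ∪ ({p | 2 ≤ ‖p.2‖} ∪ {p | p.1.re ≤ 0})) ∩
      ({p : ℂ × ℂ | 2 ≤ ‖p.2‖} ∪ ({p | p.1.re ≤ 0} ∪ {p | 0 ≤ p.1.im}))) := by
    ext p
    simp only [EclA, Set.mem_setOf_eq, Set.mem_inter_iff, Set.mem_union]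
    tauto
  rw [heq]
  exact (((((isClosed_le continuous_const (continuous_norm.comp continuous_fst)).inter
    (isClosed_le (continuous_norm.comp continuous_fst) continuous_const)).inter
    (isClosed_le (continuous_norm.comp continuous_snd) continuous_const)).inter
    (hw1.union (hre.union him))).inter
    (hw1.union (hw2.union hre))).inter (hw2.union (hre.union him'))

lemma domD_subset_EclA : domD ⊆ EclA := by
  rintro ⟨z, w⟩ ⟨r, φ, hr1, hr2, hφ1, hφ2, hz, hA, hB, hC⟩
  dsimp only at hz hA hB hC
  have hπ := Real.pi_pos
  have hr0 : (0:ℝ) < r := by linarith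
  have habs : ‖z‖ = r := by
    rw [hz, norm_mul, Complex.norm_real, Complex.norm_exp]
    simp [abs_of_pos hr0]
  have hre : z.re = r * Real.cos φ := by
    rw [hz, Complex.re_ofReal_mul, Complex.exp_ofReal_mul_I_re]
  have him : z.im = r * Real.sin φ := by
    rw [hz, Complex.im_ofReal_mul, Complex.exp_ofReal_mul_I_im]
  have hre_cases : 0 < z.re → φ < Real.pi/2 ∨ 3*Real.pi/2 < φ := by
    intro h
    have hc : 0 < Real.cos φ := by rw [hre] at h; nlinarith [Real.cos_le_one φ]
    by_contra hcon
    push_neg at hcon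
    obtain ⟨h1', h2'⟩ := hcon
    have := Real.cos_nonpos_of_pi_div_two_le_of_le h1' (by linarith)
    linarith
  have hsinpos : 0 < z.im → φ < Real.pi := by
    intro h
    have hs : 0 < Real.sin φ := by rw [him] at h; nlinarith [Real.neg_one_le_sin φ]
    by_contra hcon
    push_neg at hcon
    have h2 : Real.sin (2*Real.pi - φ) = -Real.sin φ := by
      rw [show 2*Real.pi - φ = -(φ - 2*Real.pi) by ring, Real.sin_neg, Real.sin_sub_two_pi]
    have := Real.sin_nonneg_of_nonneg_of_le_pi (x := 2*Real.pi - φ) (by linarith) (by linarith)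
    linarith
  have hsinneg : z.im < 0 → Real.pi < φ := by
    intro h
    have hs : Real.sin φ < 0 := by rw [him] at h; nlinarith [Real.sin_le_one φ]
    by_contra hcon
    push_neg at hcon
    have := Real.sin_nonneg_of_nonneg_of_le_pi hφ1.le hcon
    linarith
  refine ⟨by rw [habs]; exact by linarith, by rw [habs]; exact by linarith, ?_, ?_, ?_, ?_⟩
  · -- |w| ≤ 3
    rcases le_or_gt φ (Real.pi/2) with h | h
    · linarith [hA h]
    · rcases lt_or_ge φ (3*Real.pi/2) with h' | h'
      · linarith [hB h h']
      · linarith [(hC h').2]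
  · -- |w| ≤ 1 ∨ re ≤ 0 ∨ im ≤ 0
    by_cases hzre : z.re ≤ 0
    · exact Or.inr (Or.inl hzre)
    by_cases hzim : z.im ≤ 0
    · exact Or.inr (Or.inr hzim)
    push_neg at hzre hzim
    rcases hre_cases hzre with h | h
    · exact Or.inl (hA h.le).le
    · linarith [hsinpos hzim]
  · -- |w| ≤ 1 ∨ 2 ≤ |w| ∨ re ≤ 0
    by_cases hzre : z.re ≤ 0
    · exact Or.inr (Or.inr hzre)
    push_neg at hzre
    rcases hre_cases hzre with h | h
    · exact Or.inl (hA h.le).le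
    · exact Or.inr (Or.inl (hC h.le).1.le)
  · -- 2 ≤ |w| ∨ re ≤ 0 ∨ 0 ≤ im
    by_cases hzre : z.re ≤ 0
    · exact Or.inr (Or.inl hzre)
    by_cases hzim : 0 ≤ z.im
    · exact Or.inr (Or.inr hzim)
    push_neg at hzre hzim
    rcases hre_cases hzre with h | h
    · linarith [hsinneg hzim]
    · exact Or.inl (hC h.le).1.le

lemma EclA_subset_UA : EclA ⊆ UA := by
  rintro ⟨z, w⟩ ⟨h1, h2, h3, hb, hc, hd⟩
  simp only [UA, W1A, WbA, W2A, W3A, Set.mem_union, Set.mem_setOf_eq]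
  rcases lt_trichotomy z.re 0 with hre | hre | hre
  · exact Or.inr (Or.inl (Or.inl hre))
  · -- re = 0
    have habsim : 1/2 ≤ |z.im| := by
      have h := Complex.norm_le_abs_re_add_abs_im z
      rw [hre] at h
      simp only [abs_zero, zero_add] at h
      linarith
    rcases le_abs.mp habsim with h | h
    · exact Or.inl (Or.inr ⟨by linarith, by rw [hre]; norm_num⟩)
    · exact Or.inr (Or.inl (Or.inr (by linarith)))
  · rcases lt_trichotomy z.im 0 with him | him | him
    · have hw : 2 ≤ ‖w‖ := by
        rcases hd with h | h | h
        · exact h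
        · linarith
        · linarith
      exact Or.inr (Or.inr ⟨Or.inl him, by linarith⟩)
    · rcases hc with h | h | h
      · exact Or.inl (Or.inl ⟨Or.inr ⟨hre, by rw [him]; norm_num⟩, by linarith⟩)
      · exact Or.inr (Or.inr ⟨Or.inr ⟨hre, by rw [him]; norm_num⟩, by linarith⟩)
      · linarith
    · have hw : ‖w‖ ≤ 1 := by
        rcases hb with h | h | h
        · exact h
        · linarith
        · linarith
      exact Or.inl (Or.inl ⟨Or.inl him, by linarith⟩)

lemma gA_eq_W1 (a : ℝ) {p : ℂ × ℂ} (hp : p ∈ W1A ∪ WbA) :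
    gA a p = Complex.exp (psiA (Complex.log p.1 - (Real.log a : ℂ))) := by
  simp only [gA]
  rw [if_pos hp]

lemma gA_eq_W2 (a : ℝ) {p : ℂ × ℂ} (hp : p ∈ W2A) :
    gA a p = Complex.exp (psiA (Complex.log (-p.1) + Real.pi * Complex.I
      - (Real.log a : ℂ))) := by
  by_cases h1 : p ∈ W1A ∪ WbA
  · simp only [gA]
    rw [if_pos h1]
    have him : 0 < p.1.im := by
      rcases h1 with h | h
      · rcases h.1 with h' | h'
        · exact h'
        · rcases hp with h2 | h2
          · linarith [h'.1]
          · linarith [h'.2]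
      · linarith [h.1]
    rw [logNeg_of_im_pos him]
    congr 2
    ring
  · simp only [gA]
    rw [if_neg h1, if_pos hp]

lemma gA_eq_W3 (a : ℝ) {p : ℂ × ℂ} (hp : p ∈ W3A) :
    gA a p = Complex.exp (psiA (Complex.log p.1 + 2 * Real.pi * Complex.I
      - (Real.log a : ℂ))) := by
  have h1 : p ∉ W1A ∪ WbA := by
    rintro (h | h)
    · linarith [h.2, hp.2]
    · rcases hp.1 with h' | h'
      · linarith [h.1]
      · linarith [h.1, h'.2]
  by_cases h2 : p ∈ W2A
  · simp only [gA]
    rw [if_neg h1, if_pos h2]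
    have him : p.1.im < 0 := by
      rcases h2 with h | h
      · rcases hp.1 with h' | h'
        · exact h'
        · linarith [h'.1]
      · linarith
    rw [logNeg_of_im_neg him]
    congr 2
    ring
  · simp only [gA]
    rw [if_neg h1, if_neg h2]

lemma diff_psiA : Differentiable ℂ psiA := by
  unfold psiA
  exact (differentiable_id.const_mul _).sub ((differentiable_pow 2).const_mul _)

lemma diff_gA (a : ℝ) : DifferentiableOn ℂ (gA a) UA := by
  intro p hp
  apply DifferentiableAt.differentiableWithinAt
  rcases hp with h1 | h23
  · have hz : p.1 ∈ Complex.slitPlane := by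
      rcases h1 with h | h
      · rcases h.1 with h' | h'
        · exact Or.inr (ne_of_gt h')
        · exact Or.inl h'.1
      · exact Or.inr (ne_of_gt (by linarith [h.1]))
    have hlog : DifferentiableAt ℂ (fun q : ℂ × ℂ => Complex.log q.1) p :=
      (Complex.differentiableAt_log hz).comp p differentiableAt_fst
    have hF : DifferentiableAt ℂ
        (fun q : ℂ × ℂ => Complex.exp (psiA (Complex.log q.1 - (Real.log a : ℂ)))) p :=
      ((diff_psiA.differentiableAt).comp p (hlog.sub_const _)).cexp
    exact hF.congr_of_eventuallyEq
      (Filter.eventually_of_mem ((isOpen_W1A.union isOpen_WbA).mem_nhds h1)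
        (fun q hq => gA_eq_W1 a hq))
  rcases h23 with h2 | h3
  · have hz : -p.1 ∈ Complex.slitPlane := by
      rcases h2 with h | h
      · exact Or.inl (by simp only [Complex.neg_re]; linarith)
      · exact Or.inr (ne_of_gt (by simp only [Complex.neg_im]; linarith))
    have hlog : DifferentiableAt ℂ (fun q : ℂ × ℂ => Complex.log (-q.1)) p :=
      (Complex.differentiableAt_log hz).comp p differentiableAt_fst.neg
    have hF : DifferentiableAt ℂ
        (fun q : ℂ × ℂ => Complex.exp (psiA (Complex.log (-q.1) + Real.pi * Complex.I
          - (Real.log a : ℂ)))) p :=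
      ((diff_psiA.differentiableAt).comp p ((hlog.add_const _).sub_const _)).cexp
    exact hF.congr_of_eventuallyEq
      (Filter.eventually_of_mem (isOpen_W2A.mem_nhds h2) (fun q hq => gA_eq_W2 a hq))
  · have hz : p.1 ∈ Complex.slitPlane := by
      rcases h3.1 with h | h
      · exact Or.inr (ne_of_lt h)
      · exact Or.inl h.1
    have hlog : DifferentiableAt ℂ (fun q : ℂ × ℂ => Complex.log q.1) p :=
      (Complex.differentiableAt_log hz).comp p differentiableAt_fst
    have hF : DifferentiableAt ℂ
        (fun q : ℂ × ℂ => Complex.exp (psiA (Complex.log q.1 + 2 * Real.pi * Complex.I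
          - (Real.log a : ℂ)))) p :=
      ((diff_psiA.differentiableAt).comp p ((hlog.add_const _).sub_const _)).cexp
    exact hF.congr_of_eventuallyEq
      (Filter.eventually_of_mem (isOpen_W3A.mem_nhds h3) (fun q hq => gA_eq_W3 a hq))

theorem stmt2 (a : ℝ) (ha : a ∈ Icc (1 / 2 : ℝ) 1) :
    ∃ (g : ℂ × ℂ → ℂ) (U : Set (ℂ × ℂ)), IsOpen U ∧ closure domD ⊆ U ∧
      DifferentiableOn ℂ g U ∧
      (∀ w : ℂ, ‖w‖ ≤ 1 → g ((a : ℂ), w) = 1) ∧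
      (∀ p ∈ closure domD, ¬(p.1 = (a : ℂ) ∧ ‖p.2‖ ≤ 1) → ‖g p‖ < 1) := by
  obtain ⟨ha1, ha2⟩ := ha
  have ha0 : (0:ℝ) < a := by linarith
  have hDE : closure domD ⊆ EclA := closure_minimal domD_subset_EclA isClosed_EclA
  have hDU : closure domD ⊆ UA := fun p hp => EclA_subset_UA (hDE hp)
  refine ⟨gA a, UA, isOpen_UA, hDU, diff_gA a, ?_, ?_⟩
  · intro w hw
    have hmem : ((a:ℂ), w) ∈ W1A ∪ WbA := by
      left
      refine ⟨Or.inr ⟨?_, ?_⟩, by simpa using by linarith⟩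
      · simpa using ha0
      · simp only [Complex.ofReal_im]; norm_num
    rw [gA_eq_W1 a hmem]
    have hlog : Complex.log ((a:ℂ)) = ((Real.log a : ℝ) : ℂ) :=
      (Complex.ofReal_log ha0.le).symm
    simp only [hlog]
    simp [psiA]
  · intro p hp hne
    obtain ⟨hE1, hE2, hE3, hEb, hEc, hEd⟩ := hDE hp
    by_cases h1 : p ∈ W1A ∪ WbA
    · rw [gA_eq_W1 a h1, Complex.norm_exp, Real.exp_lt_one_iff, psiA_re]
      have hre : (Complex.log p.1 - (Real.log a : ℂ)).re
          = Real.log (‖p.1‖) - Real.log a := by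
        simp [Complex.log_re]
      have him : (Complex.log p.1 - (Real.log a : ℂ)).im = Complex.arg p.1 := by
        simp [Complex.log_im]
      rw [hre, him]
      have him0 : 0 ≤ p.1.im := by
        rcases h1 with h | h
        · rcases h.1 with h' | h'
          · exact h'.le
          · by_contra hcon
            push_neg at hcon
            rcases hEd with hd | hd | hd
            · linarith [h.2]
            · linarith [h'.1]
            · linarith
        · linarith [h.1]
      have hy0 : 0 ≤ Complex.arg p.1 := Complex.arg_nonneg_iff.mpr him0
      have hy1 : Complex.arg p.1 ≤ 9 := by
        linarith [Complex.arg_le_pi p.1, Real.pi_le_four]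
      apply keyA hy0 hy1
      by_contra hcon
      push_neg at hcon
      obtain ⟨hx0, hy0'⟩ := hcon
      obtain ⟨hre0, him0'⟩ := Complex.arg_eq_zero_iff.mp hy0'
      have habs0 : (0:ℝ) < ‖p.1‖ := by linarith
      have habs : ‖p.1‖ = a := by
        have hlogeq : Real.log (‖p.1‖) = Real.log a := by
          have := sub_eq_zero.mp hx0
          linarith [this]
        calc ‖p.1‖ = Real.exp (Real.log (‖p.1‖)) :=
              (Real.exp_log habs0).symm
          _ = Real.exp (Real.log a) := by rw [hlogeq]
          _ = a := Real.exp_log ha0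
      have hz' : p.1 = ((p.1.re : ℝ) : ℂ) := Complex.ext rfl (by simp [him0'])
      have habsre : ‖p.1‖ = |p.1.re| := by
        conv_lhs => rw [hz']
        exact (Complex.norm_real _).trans (Real.norm_eq_abs _)
      have hzre : p.1.re = a := by
        rw [habs, _root_.abs_of_nonneg hre0] at habsre
        linarith
      have hpz : p.1 = (a:ℂ) := by
        apply Complex.ext
        · simpa using hzre
        · simpa using him0'
      have hw1 : ‖p.2‖ ≤ 1 := by
        rcases hEc with h | h | h
        · exact h
        · exfalso
          rcases h1 with hW | hW
          · linarith [hW.2]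
          · linarith [hW.2, hzre]
        · linarith [h, hzre]
      exact hne ⟨hpz, hw1⟩
    · by_cases h2 : p ∈ W2A
      · rw [gA_eq_W2 a h2, Complex.norm_exp, Real.exp_lt_one_iff, psiA_re]
        have him : (Complex.log (-p.1) + Real.pi * Complex.I - (Real.log a : ℂ)).im
            = Complex.arg (-p.1) + Real.pi := by
          simp [Complex.log_im]
        rw [him]
        have hy0 : 0 < Complex.arg (-p.1) + Real.pi := by
          linarith [Complex.neg_pi_lt_arg (-p.1)]
        have hy1 : Complex.arg (-p.1) + Real.pi ≤ 9 := by
          linarith [Complex.arg_le_pi (-p.1), Real.pi_le_four]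
        exact keyA hy0.le hy1 (Or.inr (ne_of_gt hy0))
      · have h3 : p ∈ W3A := by
          rcases hDU hp with h | h
          · exact absurd h h1
          rcases h with h | h
          · exact absurd h h2
          · exact h
        rw [gA_eq_W3 a h3, Complex.norm_exp, Real.exp_lt_one_iff, psiA_re]
        have him : (Complex.log p.1 + 2 * Real.pi * Complex.I - (Real.log a : ℂ)).im
            = Complex.arg p.1 + 2 * Real.pi := by
          simp [Complex.log_im]
        rw [him]
        have hπ := Real.pi_pos
        have hy0 : 0 < Complex.arg p.1 + 2 * Real.pi := by
          linarith [Complex.neg_pi_lt_arg p.1]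
        have him0 : p.1.im ≤ 0 := by
          rcases h3.1 with h | h
          · exact h.le
          · by_contra hcon
            push_neg at hcon
            rcases hEb with h' | h' | h'
            · linarith [h3.2]
            · linarith [h.1]
            · linarith
        have harg : Complex.arg p.1 ≤ 0 := by
          rcases lt_or_eq_of_le him0 with h | h
          · exact (Complex.arg_neg_iff.mpr h).le
          · rcases h3.1 with hh | hh
            · linarith
            · exact le_of_eq (Complex.arg_eq_zero_iff.mpr ⟨hh.1.le, h⟩)
        have hy1 : Complex.arg p.1 + 2 * Real.pi ≤ 9 := by
          linarith [Real.pi_le_four]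
        exact keyA hy0.le hy1 (Or.inr (ne_of_gt hy0))
end
end

section
/- For every a ∈ I = [1/2, 1] and every compact set K ⊆ cl D that is norming for O(cl D), one has K ∩ ({a} × cl 𝔻) ≠ ∅. -/
open Set Complex

noncomputable section

/-! ### Auxiliary construction -/

/-- A branch of log adapted to the slit structure of `domD`. -/
def ell (p : ℂ × ℂ) : ℂ :=
  if |p.1.im| < p.1.re then
    (if 3/2 ≤ ‖p.2‖ then Complex.log p.1 + (2*Real.pi : ℝ) * I
     else Complex.log p.1)
  else Complex.log (-p.1) + (Real.pi : ℝ) * I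

/-- The peak function. -/
def fa (a : ℝ) (p : ℂ × ℂ) : ℂ :=
  p.2 * Complex.exp (2 * Complex.exp (I * (ell p - (Real.log a : ℝ))))

/-- A closed superset of `domD`. -/
def CC : Set (ℂ × ℂ) :=
  {p | 1/2 ≤ ‖p.1‖ ∧ ‖p.1‖ ≤ 1 ∧ ‖p.2‖ ≤ 3 ∧
    (‖p.2‖ ≤ 1 ∨ p.1.re ≤ 0 ∨ p.1.im ≤ 0) ∧
    (p.1.re ≤ 0 ∨ 0 ≤ p.1.im ∨ 2 ≤ ‖p.2‖) ∧
    (p.1.re ≤ p.1.im ∨ p.1.im ≤ -p.1.re ∨ ‖p.2‖ ≤ 1 ∨ 2 ≤ ‖p.2‖)}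

/-- The open set on which `fa` is holomorphic. -/
def UU : Set (ℂ × ℂ) :=
  {p | 1/4 < ‖p.1‖ ∧
    ¬(p.1.im = p.1.re ∧ 0 ≤ p.1.re ∧ 7/5 ≤ ‖p.2‖) ∧
    ¬(p.1.im = -p.1.re ∧ 0 ≤ p.1.re ∧ ‖p.2‖ ≤ 8/5) ∧
    ¬(|p.1.im| ≤ p.1.re ∧ 7/5 ≤ ‖p.2‖ ∧ ‖p.2‖ ≤ 8/5)}

lemma contRe : Continuous fun p : ℂ × ℂ => p.1.re := Complex.continuous_re.comp continuous_fst
lemma contIm : Continuous fun p : ℂ × ℂ => p.1.im := Complex.continuous_im.comp continuous_fst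
lemma contA1 : Continuous fun p : ℂ × ℂ => ‖p.1‖ :=
  continuous_norm.comp continuous_fst
lemma contA2 : Continuous fun p : ℂ × ℂ => ‖p.2‖ :=
  continuous_norm.comp continuous_snd

lemma isClosed_CC : IsClosed CC := by
  unfold CC
  simp only [Set.setOf_and, Set.setOf_or]
  refine (isClosed_le continuous_const contA1).inter
    ((isClosed_le contA1 continuous_const).inter
    ((isClosed_le contA2 continuous_const).inter
    ((((isClosed_le contA2 continuous_const).union
        ((isClosed_le contRe continuous_const).union (isClosed_le contIm continuous_const))).inter
    (((isClosed_le contRe continuous_const).union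
        ((isClosed_le continuous_const contIm).union
          (isClosed_le continuous_const contA2))).inter
    ((isClosed_le contRe contIm).union
      ((isClosed_le contIm contRe.neg).union
        ((isClosed_le contA2 continuous_const).union
          (isClosed_le continuous_const contA2)))))))))

lemma isOpen_UU : IsOpen UU := by
  unfold UU
  simp only [Set.setOf_and]
  refine (isOpen_lt continuous_const contA1).inter ?_
  refine IsOpen.inter ?_ (IsOpen.inter ?_ ?_)
  · have : IsClosed {p : ℂ × ℂ | p.1.im = p.1.re ∧ 0 ≤ p.1.re ∧ 7/5 ≤ ‖p.2‖} := by
      simp only [Set.setOf_and]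
      exact (isClosed_eq contIm contRe).inter
        ((isClosed_le continuous_const contRe).inter (isClosed_le continuous_const contA2))
    exact this.isOpen_compl
  · have : IsClosed {p : ℂ × ℂ | p.1.im = -p.1.re ∧ 0 ≤ p.1.re ∧ ‖p.2‖ ≤ 8/5} := by
      simp only [Set.setOf_and]
      exact (isClosed_eq contIm contRe.neg).inter
        ((isClosed_le continuous_const contRe).inter (isClosed_le contA2 continuous_const))
    exact this.isOpen_compl
  · have : IsClosed {p : ℂ × ℂ | |p.1.im| ≤ p.1.re ∧ 7/5 ≤ ‖p.2‖ ∧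
        ‖p.2‖ ≤ 8/5} := by
      simp only [Set.setOf_and]
      exact (isClosed_le contIm.abs contRe).inter
        ((isClosed_le continuous_const contA2).inter (isClosed_le contA2 continuous_const))
    exact this.isOpen_compl

lemma domD_subset_CC : domD ⊆ CC := by
  rintro ⟨z, w⟩ ⟨r, φ, hr1, hr2, hφ0, hφ2, hz, h6, h7, h8⟩
  simp only at hz h6 h7 h8
  have hπ := Real.pi_gt_three
  have hrpos : (0:ℝ) < r := by linarith
  have habs : ‖z‖ = r := by
    rw [hz, norm_mul, Complex.norm_real, Complex.norm_exp_ofReal_mul_I, Real.norm_eq_abs, abs_of_pos hrpos, mul_one]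
  have hre : z.re = r * Real.cos φ := by
    rw [hz, Complex.mul_re]
    simp [Complex.exp_ofReal_mul_I_re, Complex.exp_ofReal_mul_I_im]
  have him : z.im = r * Real.sin φ := by
    rw [hz, Complex.mul_im]
    simp [Complex.exp_ofReal_mul_I_re, Complex.exp_ofReal_mul_I_im]
  have hsin_neg : Real.pi < φ → Real.sin φ ≤ 0 := by
    intro h
    have h1 : Real.sin (φ - Real.pi) = -Real.sin φ := Real.sin_sub_pi φ
    have h2 : 0 ≤ Real.sin (φ - Real.pi) :=
      Real.sin_nonneg_of_nonneg_of_le_pi (by linarith) (by linarith)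
    linarith
  refine ⟨by rw [habs]; linarith, by rw [habs]; linarith, ?_, ?_, ?_, ?_⟩
  · by_cases hA : φ ≤ Real.pi/2
    · linarith [h6 hA]
    · by_cases hB : φ < 3*Real.pi/2
      · linarith [h7 (not_le.1 hA) hB]
      · linarith [(h8 (not_lt.1 hB)).2]
  · by_cases hA : φ ≤ Real.pi/2
    · exact Or.inl (h6 hA).le
    · by_cases hB : φ ≤ Real.pi
      · refine Or.inr (Or.inl ?_)
        have hc : Real.cos φ ≤ 0 :=
          Real.cos_nonpos_of_pi_div_two_le_of_le (not_le.1 hA).le (by linarith)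
        rw [hre]; exact mul_nonpos_of_nonneg_of_nonpos hrpos.le hc
      · refine Or.inr (Or.inr ?_)
        rw [him]
        exact mul_nonpos_of_nonneg_of_nonpos hrpos.le (hsin_neg (not_le.1 hB))
  · by_cases hB : φ ≤ Real.pi
    · refine Or.inr (Or.inl ?_)
      rw [him]
      exact mul_nonneg hrpos.le (Real.sin_nonneg_of_nonneg_of_le_pi hφ0.le hB)
    · by_cases hC : φ < 3*Real.pi/2
      · refine Or.inl ?_
        have hc : Real.cos φ ≤ 0 :=
          Real.cos_nonpos_of_pi_div_two_le_of_le (by linarith) (by linarith)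
        rw [hre]; exact mul_nonpos_of_nonneg_of_nonpos hrpos.le hc
      · exact Or.inr (Or.inr (h8 (not_lt.1 hC)).1.le)
  · by_cases hA : φ ≤ Real.pi/2
    · exact Or.inr (Or.inr (Or.inl (h6 hA).le))
    · by_cases hB : φ ≤ Real.pi
      · refine Or.inl ?_
        have hc : Real.cos φ ≤ 0 :=
          Real.cos_nonpos_of_pi_div_two_le_of_le (not_le.1 hA).le (by linarith)
        have hs : 0 ≤ Real.sin φ := Real.sin_nonneg_of_nonneg_of_le_pi hφ0.le hB
        rw [hre, him]
        nlinarith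
      · by_cases hC : φ < 3*Real.pi/2
        · refine Or.inr (Or.inl ?_)
          have hc : Real.cos φ ≤ 0 :=
            Real.cos_nonpos_of_pi_div_two_le_of_le (by linarith) (by linarith)
          have hs : Real.sin φ ≤ 0 := hsin_neg (not_le.1 hB)
          rw [hre, him]
          nlinarith
        · exact Or.inr (Or.inr (Or.inr (h8 (not_lt.1 hC)).1.le))

lemma CC_subset_UU : CC ⊆ UU := by
  rintro ⟨z, w⟩ ⟨hc1, hc2, hc3, hc4, hc5, hc6⟩
  simp only at hc1 hc2 hc3 hc4 hc5 hc6 ⊢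
  have hz0 : z ≠ 0 := by
    intro h; rw [h] at hc1; simp at hc1; linarith
  have hzre : z.re = 0 → z.im = 0 → False := by
    intro h1 h2
    exact hz0 (Complex.ext h1 h2)
  refine ⟨by linarith, ?_, ?_, ?_⟩
  · rintro ⟨h1, h2, h3⟩
    rcases lt_or_eq_of_le h2 with h2' | h2'
    · rcases hc4 with h | h | h
      · linarith
      · linarith
      · rw [h1] at h; linarith
    · exact hzre h2'.symm (by rw [h1, ← h2'])
  · rintro ⟨h1, h2, h3⟩
    rcases lt_or_eq_of_le h2 with h2' | h2'
    · rcases hc5 with h | h | h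
      · linarith
      · rw [h1] at h; linarith
      · linarith
    · exact hzre h2'.symm (by rw [h1, ← h2']; ring)
  · rintro ⟨h1, h2, h3⟩
    have him1 : z.im ≤ z.re := le_trans (le_abs_self _) h1
    have him2 : -z.re ≤ z.im := by
      have := neg_abs_le z.im; linarith [neg_le_neg h1]
    rcases hc6 with h | h | h | h
    · -- z.re ≤ z.im, so z.im = z.re
      have hee : z.im = z.re := le_antisymm him1 h
      rcases lt_or_eq_of_le (le_trans (abs_nonneg _) h1) with hre' | hre'
      · rcases hc4 with h' | h' | h'
        · linarith
        · linarith
        · rw [hee] at h'; linarith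
      · exact hzre hre'.symm (by rw [hee, ← hre'])
    · -- z.im ≤ -z.re, so z.im = -z.re
      have hee : z.im = -z.re := le_antisymm h him2
      rcases lt_or_eq_of_le (le_trans (abs_nonneg _) h1) with hre' | hre'
      · rcases hc5 with h' | h' | h'
        · linarith
        · rw [hee] at h'; linarith
        · linarith
      · exact hzre hre'.symm (by rw [hee, ← hre']; ring)
    · linarith
    · linarith

lemma ell_re (p : ℂ × ℂ) : (ell p).re = Real.log (‖p.1‖) := by
  unfold ell
  split_ifs with h1 h2 <;>
    simp [Complex.log_re, Complex.add_re, norm_neg]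

lemma log_neg_of_im_pos {z : ℂ} (h : 0 < z.im) :
    Complex.log (-z) = Complex.log z - Real.pi * I := by
  apply Complex.ext
  · simp [Complex.log_re]
  · simp [Complex.log_im, Complex.arg_neg_eq_arg_sub_pi_of_im_pos h]

lemma log_neg_of_im_neg {z : ℂ} (h : z.im < 0) :
    Complex.log (-z) = Complex.log z + Real.pi * I := by
  apply Complex.ext
  · simp [Complex.log_re]
  · simp [Complex.log_im, Complex.arg_neg_eq_arg_add_pi_of_im_neg h]

lemma ell_facts (p : ℂ × ℂ) (hp : p ∈ CC) :
    0 ≤ (ell p).im ∧ (1 < ‖p.2‖ → Real.pi/2 ≤ (ell p).im) ∧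
      ((ell p).im = 0 → p.1 = ((‖p.1‖ : ℝ) : ℂ)) := by
  obtain ⟨hc1, hc2, hc3, hc4, hc5, hc6⟩ := hp
  have hπ := Real.pi_gt_three
  have hz0 : p.1 ≠ 0 := by
    intro h; rw [h] at hc1; simp at hc1; linarith
  unfold ell
  split_ifs with h1 h2
  · -- inner, high w
    have him : (Complex.log p.1 + ((2*Real.pi : ℝ) : ℂ) * I).im = Complex.arg p.1 + 2*Real.pi := by
      simp [Complex.log_im]
    rw [him]
    have harg := Complex.neg_pi_lt_arg p.1
    exact ⟨by linarith, fun _ => by linarith, fun h => by linarith⟩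
  · -- inner, low w
    have hw32 : ‖p.2‖ < 3/2 := not_le.1 h2
    have hre : 0 < p.1.re := lt_of_le_of_lt (abs_nonneg _) h1
    have him0 : 0 ≤ p.1.im := by
      by_contra h
      push_neg at h
      rcases hc5 with h' | h' | h'
      · linarith
      · linarith
      · linarith
    rw [Complex.log_im]
    have harg : 0 ≤ Complex.arg p.1 := Complex.arg_nonneg_iff.2 him0
    refine ⟨harg, ?_, ?_⟩
    · intro hw1
      exfalso
      rcases hc4 with h' | h' | h'
      · linarith
      · linarith
      · have himeq : p.1.im = 0 := le_antisymm h' him0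
        rcases hc6 with h'' | h'' | h'' | h''
        · rw [himeq] at h''; linarith
        · rw [himeq] at h''; linarith
        · linarith
        · linarith
    · intro h0
      obtain ⟨hre0, him0'⟩ := Complex.arg_eq_zero_iff.1 h0
      have hz : p.1 = ((p.1.re : ℝ) : ℂ) := Complex.ext rfl (by simp [him0'])
      have habs : ‖p.1‖ = p.1.re := by
        rw [hz, Complex.norm_real]
        simp [_root_.abs_of_nonneg hre0]
      rw [habs]
      exact hz
  · -- outer
    have him : (Complex.log (-p.1) + ((Real.pi : ℝ) : ℂ) * I).im
        = Complex.arg (-p.1) + Real.pi := by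
      simp [Complex.log_im]
    rw [him]
    have harg := Complex.neg_pi_lt_arg (-p.1)
    refine ⟨by linarith, ?_, fun h => by linarith⟩
    intro hw1
    have h4 : p.1.re ≤ 0 ∨ p.1.im ≤ 0 := by
      rcases hc4 with h' | h' | h'
      · linarith
      · exact Or.inl h'
      · exact Or.inr h'
    have : -(Real.pi/2) ≤ Complex.arg (-p.1) := by
      rw [Complex.neg_pi_div_two_le_arg_iff]
      rcases h4 with h' | h'
      · exact Or.inl (by simp; linarith)
      · exact Or.inr (by simp; linarith)
    linarith

lemma abs_fa (a : ℝ) (p : ℂ × ℂ) :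
    ‖fa a p‖ = ‖p.2‖ *
      Real.exp (2 * (Real.exp (-(ell p).im) * Real.cos ((ell p).re - Real.log a))) := by
  unfold fa
  rw [norm_mul, Complex.norm_exp]
  congr 2
  have h1 : (2 * Complex.exp (I * (ell p - ((Real.log a : ℝ) : ℂ)))).re
      = 2 * (Complex.exp (I * (ell p - ((Real.log a : ℝ) : ℂ)))).re := by
    simp [Complex.mul_re]
  rw [h1, Complex.exp_re]
  congr 2
  · simp [Complex.mul_re]
  · simp [Complex.mul_im]

lemma fa_bound (a : ℝ) (ha : a ∈ Icc (1/2 : ℝ) 1) (p : ℂ × ℂ) (hp : p ∈ CC) :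
    ‖fa a p‖ ≤ Real.exp 2 ∧
      (¬(p.1 = (a : ℂ) ∧ ‖p.2‖ ≤ 1) → ‖fa a p‖ < Real.exp 2) := by
  obtain ⟨hy0, hyw, hy_eq⟩ := ell_facts p hp
  have hπ := Real.pi_gt_three
  have ha0 : (0:ℝ) < a := by have := ha.1; norm_num at this ⊢; linarith
  set y := (ell p).im with hy
  set x := (ell p).re - Real.log a with hx
  have hW3 : ‖p.2‖ ≤ 3 := hp.2.2.1
  have hW0 : 0 ≤ ‖p.2‖ := norm_nonneg _
  rw [abs_fa]
  rw [← hy, ← hx]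
  have hcos1 := Real.cos_le_one x
  have hcosm1 := Real.neg_one_le_cos x
  have hexp_pos : (0:ℝ) < Real.exp (-y) := Real.exp_pos _
  have hexp1 : Real.exp (-y) ≤ 1 := Real.exp_le_one_iff.2 (by linarith)
  by_cases hw : ‖p.2‖ ≤ 1
  · have hE : 2 * (Real.exp (-y) * Real.cos x) ≤ 2 := by nlinarith
    constructor
    · calc ‖p.2‖ * Real.exp (2 * (Real.exp (-y) * Real.cos x))
          ≤ 1 * Real.exp (2 * (Real.exp (-y) * Real.cos x)) :=
            mul_le_mul_of_nonneg_right hw (Real.exp_pos _).le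
        _ ≤ Real.exp 2 := by rw [one_mul]; exact Real.exp_le_exp.2 hE
    · intro hne
      have hza : p.1 ≠ (a : ℂ) := fun h => hne ⟨h, hw⟩
      have hElt : 2 * (Real.exp (-y) * Real.cos x) < 2 := by
        rcases eq_or_lt_of_le hy0 with h0 | hpos
        · -- y = 0 : p.1 is a positive real ≠ a
          have hz := hy_eq h0.symm
          have habs_pos : (0:ℝ) < ‖p.1‖ := by
            have := hp.1; linarith
          have haz : ‖p.1‖ ≠ a := by
            intro h
            exact hza (by rw [hz, h])
          have hx0 : x ≠ 0 := by
            intro h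
            apply haz
            have h1 : Real.log (‖p.1‖) = Real.log a := by
              rw [hx, ell_re] at h; linarith
            calc ‖p.1‖ = Real.exp (Real.log (‖p.1‖)) :=
                  (Real.exp_log habs_pos).symm
              _ = Real.exp (Real.log a) := by rw [h1]
              _ = a := Real.exp_log ha0
          have hlog2 : Real.log 2 < 0.6931471808 := Real.log_two_lt_d9
          have hxb : |x| < 2 * Real.pi := by
            have hl1 : Real.log (‖p.1‖) ≤ 0 :=
              Real.log_nonpos (by linarith) hp.2.1
            have hl2 : Real.log (1/2 : ℝ) ≤ Real.log (‖p.1‖) :=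
              Real.log_le_log (by norm_num) hp.1
            have hl3 : Real.log a ≤ 0 := Real.log_nonpos (by linarith) ha.2
            have hl4 : Real.log (1/2 : ℝ) ≤ Real.log a :=
              Real.log_le_log (by norm_num) ha.1
            have hl5 : Real.log (1/2 : ℝ) = -Real.log 2 := by
              rw [one_div, Real.log_inv]
            rw [abs_lt, hx, ell_re]
            constructor <;> nlinarith
          have hcoslt : Real.cos x < 1 := by
            refine lt_of_le_of_ne hcos1 fun h => hx0 ?_
            exact (Real.cos_eq_one_iff_of_lt_of_lt (by linarith [abs_lt.1 hxb])
              (by linarith [abs_lt.1 hxb])).1 h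
          nlinarith
        · have : Real.exp (-y) < 1 := Real.exp_lt_one_iff.2 (by linarith)
          nlinarith
      calc ‖p.2‖ * Real.exp (2 * (Real.exp (-y) * Real.cos x))
          ≤ 1 * Real.exp (2 * (Real.exp (-y) * Real.cos x)) :=
            mul_le_mul_of_nonneg_right hw (Real.exp_pos _).le
        _ < Real.exp 2 := by rw [one_mul]; exact Real.exp_lt_exp.2 hElt
  · -- 1 < |w| : y ≥ π/2
    have hy2 : Real.pi/2 ≤ y := hyw (not_le.1 hw)
    have hexp32 : Real.exp (-y) ≤ Real.exp (-(3/2 : ℝ)) := Real.exp_le_exp.2 (by linarith)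
    have h4 : (4:ℝ) ≤ Real.exp (3/2 : ℝ) := by
      have h1 : (2.7182818283:ℝ) < Real.exp 1 := Real.exp_one_gt_d9
      have h2 : (1.5:ℝ) ≤ Real.exp (0.5 : ℝ) := by
        have := Real.add_one_le_exp (0.5 : ℝ); linarith
      have h3 : Real.exp (3/2 : ℝ) = Real.exp 1 * Real.exp (0.5 : ℝ) := by
        rw [← Real.exp_add]; norm_num
      nlinarith
    have hquarter : Real.exp (-(3/2) : ℝ) ≤ 1/4 := by
      have h5 : Real.exp (-(3/2) : ℝ) * Real.exp (3/2 : ℝ) = 1 := by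
        rw [← Real.exp_add]; norm_num [Real.exp_zero]
      nlinarith [Real.exp_pos (-(3/2) : ℝ)]
    have hE : 2 * (Real.exp (-y) * Real.cos x) ≤ 1/2 := by nlinarith
    have hfinal : 3 * Real.exp (1/2 : ℝ) < Real.exp 2 := by
      have h3 : Real.exp 2 = Real.exp (1/2 : ℝ) * Real.exp (3/2 : ℝ) := by
        rw [← Real.exp_add]; norm_num
      nlinarith [Real.exp_pos (1/2 : ℝ)]
    have hlt : ‖p.2‖ * Real.exp (2 * (Real.exp (-y) * Real.cos x))
        ≤ 3 * Real.exp (1/2 : ℝ) :=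
      mul_le_mul hW3 (Real.exp_le_exp.2 hE) (Real.exp_pos _).le (by norm_num)
    exact ⟨(hlt.trans hfinal.le), fun _ => lt_of_le_of_lt hlt hfinal⟩

lemma fa_diffOn (a : ℝ) : DifferentiableOn ℂ (fa a) UU := by
  intro p hp
  apply DifferentiableAt.differentiableWithinAt
  obtain ⟨hz4, hB1, hB2, hB3⟩ := hp
  have hz0 : p.1 ≠ 0 := by
    intro h; rw [h] at hz4; simp at hz4; linarith
  have key : ∀ (S : Set (ℂ × ℂ)) (g : ℂ → ℂ), IsOpen S → p ∈ S →
      DifferentiableAt ℂ g p.1 → (∀ q ∈ S, ell q = g q.1) →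
      DifferentiableAt ℂ (fa a) p := by
    intro S g hSo hpS hg hSg
    have h1 : DifferentiableAt ℂ
        (fun q : ℂ × ℂ => q.2 * Complex.exp (2 * Complex.exp (I * (g q.1 - ((Real.log a : ℝ) : ℂ))))) p := by
      apply DifferentiableAt.mul differentiableAt_snd
      apply DifferentiableAt.cexp
      apply DifferentiableAt.const_mul
      apply DifferentiableAt.cexp
      apply DifferentiableAt.const_mul
      exact (hg.comp p differentiableAt_fst).sub_const _
    apply h1.congr_of_eventuallyEq
    filter_upwards [hSo.mem_nhds hpS] with q hq
    unfold fa
    rw [hSg q hq]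
  rcases lt_trichotomy (|p.1.im|) p.1.re with h1 | h1 | h1
  · -- inner
    have hre : 0 < p.1.re := lt_of_le_of_lt (abs_nonneg _) h1
    rcases lt_trichotomy (‖p.2‖) (3/2) with h2 | h2 | h2
    · refine key {q | |q.1.im| < q.1.re ∧ ‖q.2‖ < 3/2} Complex.log ?_ ⟨h1, h2⟩ ?_ ?_
      · exact (isOpen_lt contIm.abs contRe).inter (isOpen_lt contA2 continuous_const)
      · exact Complex.differentiableAt_log (Complex.mem_slitPlane_iff.2 (Or.inl hre))
      · rintro q ⟨hq1, hq2⟩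
        unfold ell
        rw [if_pos hq1, if_neg (not_le.2 hq2)]
    · exact absurd ⟨h1.le, by rw [h2]; norm_num, by rw [h2]; norm_num⟩ hB3
    · refine key {q | |q.1.im| < q.1.re ∧ 3/2 < ‖q.2‖}
        (fun u => Complex.log u + ((2*Real.pi : ℝ) : ℂ) * I) ?_ ⟨h1, h2⟩ ?_ ?_
      · exact (isOpen_lt contIm.abs contRe).inter (isOpen_lt continuous_const contA2)
      · exact (Complex.differentiableAt_log
          (Complex.mem_slitPlane_iff.2 (Or.inl hre))).add_const _
      · rintro q ⟨hq1, hq2⟩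
        unfold ell
        rw [if_pos hq1, if_pos hq2.le]
  · -- boundary rays
    have hre0 : 0 ≤ p.1.re := h1 ▸ abs_nonneg _
    have hrepos : 0 < p.1.re := by
      rcases lt_or_eq_of_le hre0 with h | h
      · exact h
      · exfalso
        apply hz0
        have h2 : |p.1.im| = 0 := by rw [h1, ← h]
        apply Complex.ext
        · rw [← h]; simp
        · simpa using abs_eq_zero.1 h2
    rcases (abs_eq hre0).1 h1 with he | he
    · -- im = re > 0
      have hw : ‖p.2‖ < 7/5 := by
        by_contra h
        exact hB1 ⟨he, hre0, not_lt.1 h⟩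
      refine key {q | 0 < q.1.im ∧ ‖q.2‖ < 3/2} Complex.log ?_
        ⟨by rw [he]; exact hrepos, by linarith⟩ ?_ ?_
      · exact (isOpen_lt continuous_const contIm).inter (isOpen_lt contA2 continuous_const)
      · refine Complex.differentiableAt_log (Complex.mem_slitPlane_iff.2 (Or.inl hrepos))
      · rintro q ⟨hq1, hq2⟩
        unfold ell
        by_cases hin : |q.1.im| < q.1.re
        · rw [if_pos hin, if_neg (not_le.2 hq2)]
        · rw [if_neg hin, log_neg_of_im_pos hq1]
          push_cast
          ring
    · -- im = -re < 0
      have hw : 8/5 < ‖p.2‖ := by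
        by_contra h
        exact hB2 ⟨he, hre0, not_lt.1 h⟩
      refine key {q | q.1.im < 0 ∧ 3/2 < ‖q.2‖}
        (fun u => Complex.log u + ((2*Real.pi : ℝ) : ℂ) * I) ?_
        ⟨by rw [he]; linarith, by linarith⟩ ?_ ?_
      · exact (isOpen_lt contIm continuous_const).inter (isOpen_lt continuous_const contA2)
      · exact (Complex.differentiableAt_log
          (Complex.mem_slitPlane_iff.2 (Or.inl hrepos))).add_const _
      · rintro q ⟨hq1, hq2⟩
        unfold ell
        by_cases hin : |q.1.im| < q.1.re
        · rw [if_pos hin, if_pos hq2.le]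
        · rw [if_neg hin, log_neg_of_im_neg hq1]
          push_cast
          ring
  · -- outer
    refine key {q | q.1.re < |q.1.im|} (fun u => Complex.log (-u) + ((Real.pi : ℝ) : ℂ) * I) ?_
      h1 ?_ ?_
    · exact isOpen_lt contRe contIm.abs
    · have hsl : -p.1 ∈ Complex.slitPlane := by
        rcases eq_or_ne p.1.im 0 with h | h
        · refine Complex.mem_slitPlane_iff.2 (Or.inl ?_)
          rw [h] at h1
          simp at h1 ⊢
          linarith
        · exact Complex.mem_slitPlane_iff.2 (Or.inr (by simpa using h))
      exact ((Complex.differentiableAt_log hsl).comp p.1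
        differentiableAt_id.neg).add_const _
    · rintro q hq
      unfold ell
      rw [if_neg (not_lt.2 (le_of_lt hq))]

lemma fa_peak (a : ℝ) (ha : a ∈ Icc (1/2 : ℝ) 1) :
    ‖fa a ((a : ℂ), 1)‖ = Real.exp 2 := by
  have ha0 : (0:ℝ) < a := by have := ha.1; linarith
  have h1 : ell ((a : ℂ), 1) = Complex.log (a : ℂ) := by
    have hcond1 : |((a : ℂ), (1:ℂ)).1.im| < ((a : ℂ), (1:ℂ)).1.re := by simp [ha0]
    have hcond2 : ¬ ((3:ℝ)/2 ≤ ‖((a : ℂ), (1:ℂ)).2‖) := by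
      simp only [norm_one]
      norm_num
    unfold ell
    rw [if_pos hcond1, if_neg hcond2]
  unfold fa
  rw [h1, ← Complex.ofReal_log ha0.le]
  simp [Complex.norm_exp]

lemma peak_mem_closure (a : ℝ) (ha : a ∈ Icc (1/2 : ℝ) 1) :
    ((a : ℂ), (1 : ℂ)) ∈ closure domD := by
  have hπ := Real.pi_gt_three
  have ha1 : (1/2 : ℝ) ≤ a := ha.1
  have ha2 : a ≤ 1 := ha.2
  apply mem_closure_iff_seq_limit.2
  set ε : ℕ → ℝ := fun n => 1/((n:ℝ)+2) with hεdef
  have hεpos : ∀ n, 0 < ε n := by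
    intro n
    have : (0:ℝ) < (n:ℝ)+2 := by positivity
    positivity
  have hεle : ∀ n, ε n ≤ 1/2 := by
    intro n
    rw [hεdef]
    simp only
    rw [div_le_div_iff₀ (by positivity) (by norm_num)]
    have : (0:ℝ) ≤ (n:ℝ) := Nat.cast_nonneg n
    linarith
  refine ⟨fun n => (((a + (3/4 - a) * ε n : ℝ) : ℂ) * Complex.exp ((ε n : ℝ) * I),
    ((1 - ε n : ℝ) : ℂ)), ?_, ?_⟩
  · intro n
    refine ⟨a + (3/4 - a) * ε n, ε n, ?_, ?_, hεpos n, by linarith [hεle n, hεpos n], rfl,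
      ?_, ?_, ?_⟩
    · nlinarith [hεpos n, hεle n]
    · nlinarith [hεpos n, hεle n]
    · intro _
      rw [Complex.norm_real, Real.norm_eq_abs,
        _root_.abs_of_nonneg (by linarith [hεle n] : (0:ℝ) ≤ 1 - ε n)]
      linarith [hεpos n]
    · intro h _
      exfalso
      linarith [hεle n]
    · intro h
      exfalso
      linarith [hεle n, hεpos n]
  · have hεlim : Filter.Tendsto ε Filter.atTop (nhds 0) := by
      rw [hεdef]
      simp only [one_div]
      apply Filter.Tendsto.inv_tendsto_atTop
      apply Filter.tendsto_atTop_add_const_right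
      exact tendsto_natCast_atTop_atTop
    have h1 : Filter.Tendsto (fun n => ((a + (3/4 - a) * ε n : ℝ) : ℂ)) Filter.atTop
        (nhds ((a : ℝ) : ℂ)) := by
      apply (Complex.continuous_ofReal.tendsto _).comp
      have : Filter.Tendsto (fun n => a + (3/4 - a) * ε n) Filter.atTop
          (nhds (a + (3/4 - a) * 0)) :=
        (tendsto_const_nhds.add (tendsto_const_nhds.mul hεlim))
      simpa using this
    have h2 : Filter.Tendsto (fun n => Complex.exp ((ε n : ℝ) * I)) Filter.atTop
        (nhds 1) := by
      have hc : Continuous fun t : ℝ => Complex.exp ((t : ℝ) * I) :=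
        Complex.continuous_exp.comp (Complex.continuous_ofReal.mul continuous_const)
      have := (hc.tendsto 0).comp hεlim
      simpa [Function.comp_def] using this
    have h3 : Filter.Tendsto (fun n => ((1 - ε n : ℝ) : ℂ)) Filter.atTop
        (nhds ((1:ℝ) : ℂ)) := by
      apply (Complex.continuous_ofReal.tendsto _).comp
      simpa using (tendsto_const_nhds.sub hεlim)
    have hfin := (h1.mul h2).prodMk_nhds h3
    simpa using hfin

theorem stmt3 (a : ℝ) (ha : a ∈ Icc (1 / 2 : ℝ) 1) (K : Set (ℂ × ℂ))
    (hKc : IsCompact K) (hKsub : K ⊆ closure domD)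
    (hKn : IsNorming domD K (Ocl domD)) :
    (K ∩ {p : ℂ × ℂ | p.1 = (a : ℂ) ∧ ‖p.2‖ ≤ 1}).Nonempty := by
  have ha' : a ∈ Icc (1/2 : ℝ) 1 := by norm_num at ha ⊢; exact ha
  by_contra hcon
  rw [Set.not_nonempty_iff_eq_empty] at hcon
  have hK' : ∀ p ∈ K, ¬(p.1 = (a : ℂ) ∧ ‖p.2‖ ≤ 1) := by
    intro p hp hmem
    have : p ∈ K ∩ {p : ℂ × ℂ | p.1 = (a : ℂ) ∧ ‖p.2‖ ≤ 1} := ⟨hp, hmem⟩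
    rw [hcon] at this
    exact this
  have hclC : closure domD ⊆ CC := closure_minimal domD_subset_CC isClosed_CC
  have hclU : closure domD ⊆ UU := fun p hp => CC_subset_UU (hclC hp)
  have hf : fa a ∈ Ocl domD := ⟨UU, isOpen_UU, hclU, fa_diffOn a⟩
  have heq := hKn (fa a) hf
  have hq : ((a : ℂ), (1 : ℂ)) ∈ closure domD := peak_mem_closure a ha'
  have hsup2 : sSup ((fun p => ‖fa a p‖) '' closure domD) = Real.exp 2 := by
    apply IsGreatest.csSup_eq
    constructor
    · exact ⟨_, hq, fa_peak a ha'⟩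
    · rintro v ⟨p, hp, rfl⟩
      exact (fa_bound a ha' p (hclC hp)).1
  rcases K.eq_empty_or_nonempty with hKe | hKne
  · rw [hKe] at heq
    rw [hsup2] at heq
    simp [Real.sSup_empty] at heq
    exact absurd heq.symm (Real.exp_pos 2).ne'
  · have hcont : ContinuousOn (fun p => ‖fa a p‖) K := by
      have h1 : ContinuousOn (fa a) K :=
        ((fa_diffOn a).continuousOn).mono (fun p hp => hclU (hKsub hp))
      exact continuous_norm.comp_continuousOn h1
    obtain ⟨k, hkK, hmax⟩ := hKc.exists_isMaxOn hKne hcont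
    have h1 : sSup ((fun p => ‖fa a p‖) '' K) ≤ ‖fa a k‖ :=
      csSup_le (hKne.image _) (by rintro v ⟨p, hp, rfl⟩; exact hmax hp)
    have h2 : ‖fa a k‖ < Real.exp 2 :=
      (fa_bound a ha' k (hclC (hKsub hkK))).2 (hK' k hkK)
    rw [hsup2] at heq
    rw [heq] at h1
    linarith
end
end

section
/- There exists a function h holomorphic on an open neighborhood of cl D such that h(x, w) = exp(i·log x) for all x ∈ I = [1/2, 1] and |w| ≤ 1, h(x, w) = exp(−2π + i·log x) for all x ∈ I and 2 ≤ |w| ≤ 3, and |h(z, w)| < 1 for every (z, w) ∈ cl D with z ∉ I (here log x is the real logarithm, so |h| = 1 on I × cl 𝔻 and |h| = e^{−2π} < 1 on I × cl A(2,3)). -/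
open Set Complex

noncomputable section

namespace Stmt4Aux
open Real

/-- unit complex number at angle `t` -/
noncomputable def ce (t : ℝ) : ℂ := Complex.exp ((t : ℂ) * Complex.I)

lemma ce_ne (t : ℝ) : ce t ≠ 0 := Complex.exp_ne_zero _

lemma ce_mul (a b : ℝ) : ce a * ce b = ce (a + b) := by
  rw [ce, ce, ce, ← Complex.exp_add]
  push_cast
  ring_nf

lemma ce_eq (t : ℝ) : ce t = (Real.cos t : ℂ) + (Real.sin t : ℂ) * Complex.I := by
  rw [ce, Complex.exp_mul_I, Complex.ofReal_cos, Complex.ofReal_sin]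

lemma mul_ce_re (z : ℂ) (t : ℝ) :
    (z * ce t).re = z.re * Real.cos t - z.im * Real.sin t := by
  simp [ce_eq, Complex.mul_re, Complex.mul_im, ← Complex.ofReal_cos, ← Complex.ofReal_sin]

lemma mul_ce_im (z : ℂ) (t : ℝ) :
    (z * ce t).im = z.re * Real.sin t + z.im * Real.cos t := by
  simp [ce_eq, Complex.mul_re, Complex.mul_im, ← Complex.ofReal_cos, ← Complex.ofReal_sin]

lemma c34 : Real.cos (3 * π / 4) = -(Real.sqrt 2 / 2) := by
  rw [show (3 * π / 4 : ℝ) = π - π / 4 by ring, Real.cos_pi_sub, Real.cos_pi_div_four]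

lemma s34 : Real.sin (3 * π / 4) = Real.sqrt 2 / 2 := by
  rw [show (3 * π / 4 : ℝ) = π - π / 4 by ring, Real.sin_pi_sub, Real.sin_pi_div_four]

lemma idA (z : ℂ) : (z * ce (-(π / 4))).re = Real.sqrt 2 / 2 * (z.re + z.im) := by
  rw [mul_ce_re, Real.cos_neg, Real.sin_neg, Real.cos_pi_div_four, Real.sin_pi_div_four]; ring

lemma idB (z : ℂ) : (z * ce (-(π / 4))).im = Real.sqrt 2 / 2 * (z.im - z.re) := by
  rw [mul_ce_im, Real.cos_neg, Real.sin_neg, Real.cos_pi_div_four, Real.sin_pi_div_four]; ring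

lemma idC (z : ℂ) : (z * ce (-(3 * π / 4))).re = Real.sqrt 2 / 2 * (z.im - z.re) := by
  rw [mul_ce_re, Real.cos_neg, Real.sin_neg, c34, s34]; ring

lemma idD (z : ℂ) : (z * ce (3 * π / 4)).re = -(Real.sqrt 2 / 2) * (z.re + z.im) := by
  rw [mul_ce_re, c34, s34]; ring

lemma idE (z : ℂ) : (z * ce (π / 4)).re = Real.sqrt 2 / 2 * (z.re - z.im) := by
  rw [mul_ce_re, Real.cos_pi_div_four, Real.sin_pi_div_four]; ring

lemma idF (z : ℂ) : (z * ce (π / 4)).im = Real.sqrt 2 / 2 * (z.re + z.im) := by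
  rw [mul_ce_im, Real.cos_pi_div_four, Real.sin_pi_div_four]; ring

lemma sqrt2_pos : (0 : ℝ) < Real.sqrt 2 := Real.sqrt_pos.2 (by norm_num)

lemma sqrt2_ge_one : (1 : ℝ) ≤ Real.sqrt 2 := by
  nlinarith [Real.sq_sqrt (by norm_num : (0:ℝ) ≤ 2), Real.sqrt_nonneg 2]


/-- branch of `log` suited to angles near `[0, 5π/4)` -/
noncomputable def fA (z : ℂ) : ℂ := Complex.log (z * ce (-(π / 4))) + (π / 4 : ℝ) * Complex.I

/-- branch of `log` suited to angles near `(3π/4, 2π]` (value `log x + 2πi` on positive reals) -/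
noncomputable def fB (z : ℂ) : ℂ := Complex.log (z * ce (π / 4)) + (7 * π / 4 : ℝ) * Complex.I

lemma ce_pi : ce π = -1 := by
  rw [ce]; exact Complex.exp_pi_mul_I

lemma ce_two_pi : ce (2 * π) = 1 := by
  rw [ce, show ((2 * π : ℝ) : ℂ) = 2 * (π : ℂ) by push_cast; ring]
  exact Complex.exp_two_pi_mul_I

lemma neg_one_mul_ce₁ : (-1 : ℂ) * ce (-(π / 4)) = ce (3 * π / 4) := by
  rw [← ce_pi, ce_mul, show π + -(π / 4) = 3 * π / 4 by ring]

lemma neg_one_mul_ce₂ : (-1 : ℂ) * ce (π / 4) = ce (-(3 * π / 4)) := by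
  rw [← ce_pi, ce_mul, show π + π / 4 = -(3 * π / 4) + 2 * π by ring, ← ce_mul, ce_two_pi,
    mul_one]

lemma log_ce {t : ℝ} (h1 : -π < t) (h2 : t ≤ π) : Complex.log (ce t) = (t : ℂ) * Complex.I := by
  rw [ce, Complex.log_exp] <;> simp [h1, h2]

lemma ne_zero_of_re_pos {z : ℂ} {t : ℝ} (h : 0 < (z * ce t).re) : z ≠ 0 := by
  rintro rfl; simp at h

/-- derivative of `fA` -/
lemma fA_hasDerivAt {z : ℂ} (hz : z * ce (-(π / 4)) ∈ Complex.slitPlane) :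
    HasDerivAt fA z⁻¹ z := by
  have hz0 : z ≠ 0 := by
    rintro rfl; simp [Complex.slitPlane] at hz
  have hmul : HasDerivAt (fun w : ℂ => w * ce (-(π / 4))) (ce (-(π / 4))) z := by
    simpa using (hasDerivAt_id z).mul_const (ce (-(π / 4)))
  have hlog := (Complex.hasDerivAt_log hz).comp z hmul
  have := hlog.add_const ((π / 4 : ℝ) * Complex.I)
  exact this.congr_deriv (by rw [mul_inv, mul_assoc, inv_mul_cancel₀ (ce_ne _), mul_one])

lemma fB_hasDerivAt {z : ℂ} (hz : z * ce (π / 4) ∈ Complex.slitPlane) :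
    HasDerivAt fB z⁻¹ z := by
  have hmul : HasDerivAt (fun w : ℂ => w * ce (π / 4)) (ce (π / 4)) z := by
    simpa using (hasDerivAt_id z).mul_const (ce (π / 4))
  have hlog := (Complex.hasDerivAt_log hz).comp z hmul
  have := hlog.add_const ((7 * π / 4 : ℝ) * Complex.I)
  exact this.congr_deriv (by rw [mul_inv, mul_assoc, inv_mul_cancel₀ (ce_ne _), mul_one])

lemma slitA {z : ℂ} (h : 0 < (z * ce (-(3 * π / 4))).re) :
    z * ce (-(π / 4)) ∈ Complex.slitPlane := by
  refine Or.inr ?_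
  rw [idB]
  rw [idC] at h
  exact ne_of_gt h

lemma slitB {z : ℂ} (h : 0 < (z * ce (3 * π / 4)).re) :
    z * ce (π / 4) ∈ Complex.slitPlane := by
  refine Or.inr ?_
  rw [idF]
  rw [idD] at h
  nlinarith [sqrt2_pos]

lemma slitB' {z : ℂ} (h : 0 < (z * ce (π / 4)).re) :
    z * ce (π / 4) ∈ Complex.slitPlane := Or.inl h

lemma slitA' {z : ℂ} (h : 0 < (z * ce (-(π / 4))).re) :
    z * ce (-(π / 4)) ∈ Complex.slitPlane := Or.inl h

/-- the two branches agree on the overlap sector `arg ∈ (3π/4, 5π/4)` -/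
lemma fAB {z : ℂ} (h2 : 0 < (z * ce (-(3 * π / 4))).re) (h3 : 0 < (z * ce (3 * π / 4)).re) :
    fA z = fB z := by
  set Ω : Set ℂ := {w | 0 < (w * ce (-(3 * π / 4))).re} ∩ {w | 0 < (w * ce (3 * π / 4)).re}
    with hΩ
  have lin : ∀ t : ℝ, IsLinearMap ℝ fun w : ℂ => (w * ce t).re := by
    intro t
    refine ⟨fun a b => by simp [add_mul], fun r a => ?_⟩
    simp [smul_mul_assoc, Complex.smul_re]
    try ring
  have hconv : Convex ℝ Ω :=
    (convex_halfSpace_gt (lin _) 0).inter (convex_halfSpace_gt (lin _) 0)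
  have hopen : IsOpen Ω := by
    refine IsOpen.inter ?_ ?_ <;>
      exact isOpen_lt continuous_const
        (Complex.continuous_re.comp (continuous_id.mul continuous_const))
  have hder : ∀ w ∈ Ω, HasDerivAt (fun z => fA z - fB z) 0 w := by
    intro w hw
    have hA := fA_hasDerivAt (slitA hw.1)
    have hB := fB_hasDerivAt (slitB hw.2)
    exact (hA.sub hB).congr_deriv (sub_self _)
  have hdiff : DifferentiableOn ℂ (fun z => fA z - fB z) Ω := fun w hw =>
    ((hder w hw).differentiableAt).differentiableWithinAt
  have hfd : ∀ w ∈ Ω, fderivWithin ℂ (fun z => fA z - fB z) Ω w = 0 := by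
    intro w hw
    rw [fderivWithin_of_isOpen hopen hw, (hder w hw).hasFDerivAt.fderiv]
    ext1
    simp
  have hm : z ∈ Ω := ⟨h2, h3⟩
  have hm1 : (-1 : ℂ) ∈ Ω := by
    constructor <;> simp only [Set.mem_setOf_eq, idC, idD] <;>
      · simp only [Complex.neg_re, Complex.neg_im, Complex.one_re, Complex.one_im]
        nlinarith [sqrt2_pos]
  have hconst := hconv.is_const_of_fderivWithin_eq_zero hdiff hfd hm hm1
  have hval : fA (-1 : ℂ) - fB (-1) = 0 := by
    have eA : fA (-1 : ℂ) = ((3 * π / 4 : ℝ) : ℂ) * Complex.I + ((π / 4 : ℝ) : ℂ) * Complex.I := by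
      rw [fA, neg_one_mul_ce₁, log_ce (by linarith [Real.pi_pos]) (by linarith [Real.pi_pos])]
    have eB : fB (-1 : ℂ) =
        ((-(3 * π / 4) : ℝ) : ℂ) * Complex.I + ((7 * π / 4 : ℝ) : ℂ) * Complex.I := by
      rw [fB, neg_one_mul_ce₂, log_ce (by linarith [Real.pi_pos]) (by linarith [Real.pi_pos])]
    rw [eA, eB]
    push_cast
    ring
  have := hconst
  rw [hval] at this
  exact sub_eq_zero.mp this


/-- the condition selecting branch `fA` -/
def Cnd (p : ℂ × ℂ) : Prop :=
  0 < (p.1 * ce (-(3 * π / 4))).re ∨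
    (0 < (p.1 * ce (-(π / 4))).re ∧ ‖p.2‖ < 3 / 2)

open Classical in
/-- the glued function -/
noncomputable def hh (p : ℂ × ℂ) : ℂ :=
  if Cnd p then Complex.exp (Complex.I * fA p.1) else Complex.exp (Complex.I * fB p.1)

/-- the four open pieces -/
def V1 : Set (ℂ × ℂ) := {p | 0 < (p.1 * ce (-(π / 4))).re} ∩ {p | ‖p.2‖ < 3 / 2}
def V2 : Set (ℂ × ℂ) := {p | 0 < (p.1 * ce (-(3 * π / 4))).re}
def V3 : Set (ℂ × ℂ) := {p | 0 < (p.1 * ce (3 * π / 4)).re}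
def V4 : Set (ℂ × ℂ) := {p | 0 < (p.1 * ce (π / 4)).re} ∩ {p | 3 / 2 < ‖p.2‖}

def UU : Set (ℂ × ℂ) := V1 ∪ V2 ∪ V3 ∪ V4

lemma cont_re (t : ℝ) : Continuous fun p : ℂ × ℂ => (p.1 * ce t).re :=
  Complex.continuous_re.comp (continuous_fst.mul continuous_const)

lemma cont_abs2 : Continuous fun p : ℂ × ℂ => ‖p.2‖ :=
  continuous_norm.comp continuous_snd

lemma cont_abs1 : Continuous fun p : ℂ × ℂ => ‖p.1‖ :=
  continuous_norm.comp continuous_fst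

lemma isOpen_UU : IsOpen UU := by
  refine (((?_ : IsOpen V1).union ?_).union ?_).union ?_
  · exact (isOpen_lt continuous_const (cont_re _)).inter (isOpen_lt cont_abs2 continuous_const)
  · exact isOpen_lt continuous_const (cont_re _)
  · exact isOpen_lt continuous_const (cont_re _)
  · exact (isOpen_lt continuous_const (cont_re _)).inter (isOpen_lt continuous_const cont_abs2)

/-- closed set witnessing `closure domD ⊆ UU` -/
def FF : Set (ℂ × ℂ) :=
  ({p | ‖p.2‖ ≤ 1} ∩ {p | 1 / 4 ≤ (p.1 * ce (-(π / 4))).re}) ∪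
    ({p | ‖p.2‖ ≤ 3} ∩
      ({p | 1 / 4 ≤ (p.1 * ce (-(3 * π / 4))).re} ∪ {p | 1 / 4 ≤ (p.1 * ce (3 * π / 4)).re})) ∪
    ({p | 2 ≤ ‖p.2‖} ∩ {p | ‖p.2‖ ≤ 3} ∩
      {p | 1 / 4 ≤ (p.1 * ce (π / 4)).re})

lemma isClosed_FF : IsClosed FF := by
  refine IsClosed.union (IsClosed.union ?_ ?_) ?_
  · exact (isClosed_le cont_abs2 continuous_const).inter
      (isClosed_le continuous_const (cont_re _))
  · exact (isClosed_le cont_abs2 continuous_const).inter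
      ((isClosed_le continuous_const (cont_re _)).union
        (isClosed_le continuous_const (cont_re _)))
  · exact ((isClosed_le continuous_const cont_abs2).inter
      (isClosed_le cont_abs2 continuous_const)).inter
      (isClosed_le continuous_const (cont_re _))

/-- closed set recording the closure information needed for the modulus bound -/
def GG : Set (ℂ × ℂ) :=
  {p | 1 / 2 ≤ ‖p.1‖} ∩ {p | ‖p.1‖ ≤ 1} ∩
    ({p : ℂ × ℂ | p.1.im < 0 ∧ 0 < p.1.re + p.1.im}ᶜ ∪ {p | 2 ≤ ‖p.2‖})

lemma isClosed_GG : IsClosed GG := by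
  refine IsClosed.inter ((isClosed_le continuous_const cont_abs1).inter
    (isClosed_le cont_abs1 continuous_const)) (IsClosed.union ?_ ?_)
  · refine IsOpen.isClosed_compl ?_
    exact (isOpen_lt (Complex.continuous_im.comp continuous_fst) continuous_const).inter
      (isOpen_lt continuous_const
        ((Complex.continuous_re.comp continuous_fst).add
          (Complex.continuous_im.comp continuous_fst)))
  · exact isClosed_le continuous_const cont_abs2

lemma re_aux (r φ t : ℝ) : (((r : ℂ) * ce φ) * ce t).re = r * Real.cos (φ + t) := by
  rw [mul_assoc, ce_mul, mul_ce_re]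
  simp

lemma cos_ge_sqrt {x : ℝ} (h1 : -(π / 4) ≤ x) (h2 : x ≤ π / 4) :
    Real.sqrt 2 / 2 ≤ Real.cos x := by
  have h := Real.cos_le_cos_of_nonneg_of_le_pi (abs_nonneg x)
    (by linarith [Real.pi_pos] : (π / 4 : ℝ) ≤ π) (abs_le.2 ⟨by linarith, h2⟩)
  rwa [Real.cos_abs, Real.cos_pi_div_four] at h

lemma quarter_le {r x : ℝ} (hr : 1 / 2 ≤ r) (hx : Real.sqrt 2 / 2 ≤ Real.cos x) :
    1 / 4 ≤ r * Real.cos x := by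
  nlinarith [sqrt2_ge_one, sqrt2_pos]


lemma domD_subset_FF : domD ⊆ FF := by
  rintro ⟨z, w⟩ ⟨r, φ, hr1, hr2, hφ1, hφ2, hz, hw1, hw2, hw3⟩
  simp only [Set.mem_setOf_eq] at hz
  have hzce : z = (r : ℂ) * ce φ := hz
  have hrr : (1 : ℝ) / 2 ≤ r := le_of_lt hr1
  have hπ := Real.pi_pos
  by_cases hc1 : φ ≤ π / 2
  · -- first piece
    left; left
    refine ⟨le_of_lt (hw1 hc1), ?_⟩
    simp only [Set.mem_setOf_eq, hzce, re_aux]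
    exact quarter_le hrr (cos_ge_sqrt (by linarith) (by linarith))
  by_cases hc2 : φ ≤ π
  · left; right
    refine ⟨le_of_lt (hw2 (by linarith) (by linarith)), Or.inl ?_⟩
    simp only [Set.mem_setOf_eq, hzce, re_aux]
    exact quarter_le hrr (cos_ge_sqrt (by linarith) (by linarith))
  by_cases hc3 : φ < 3 * π / 2
  · left; right
    refine ⟨le_of_lt (hw2 (by linarith) hc3), Or.inr ?_⟩
    simp only [Set.mem_setOf_eq, hzce, re_aux]
    rw [← Real.cos_sub_two_pi]
    exact quarter_le hrr (cos_ge_sqrt (by linarith) (by linarith))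
  · right
    obtain ⟨hwa, hwb⟩ := hw3 (by linarith)
    refine ⟨⟨le_of_lt hwa, le_of_lt hwb⟩, ?_⟩
    simp only [Set.mem_setOf_eq, hzce, re_aux]
    rw [← Real.cos_sub_two_pi]
    exact quarter_le hrr (cos_ge_sqrt (by linarith) (by linarith))

lemma abs_fst_eq {r φ : ℝ} (hr : 0 ≤ r) : ‖(r : ℂ) * ce φ‖ = r := by
  rw [norm_mul, Complex.norm_real, Real.norm_eq_abs, _root_.abs_of_nonneg hr, ce, Complex.norm_exp]
  simp

lemma domD_subset_GG : domD ⊆ GG := by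
  rintro ⟨z, w⟩ ⟨r, φ, hr1, hr2, hφ1, hφ2, hz, hw1, hw2, hw3⟩
  simp only [Set.mem_setOf_eq] at hz
  have hzce : z = (r : ℂ) * ce φ := hz
  have hπ := Real.pi_pos
  have habs : ‖z‖ = r := by rw [hzce]; exact abs_fst_eq (by linarith)
  refine ⟨⟨?_, ?_⟩, ?_⟩
  · simp only [Set.mem_setOf_eq, habs]; linarith
  · simp only [Set.mem_setOf_eq, habs]; linarith
  · by_cases hcase : z.im < 0 ∧ 0 < z.re + z.im
    · right
      obtain ⟨him, hre⟩ := hcase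
      have hre' : z.re = r * Real.cos φ := by
        rw [hzce, mul_ce_re]; simp
      have him' : z.im = r * Real.sin φ := by
        rw [hzce, mul_ce_im]; simp
      rw [him'] at him
      rw [hre', him'] at hre
      have hs : Real.sin φ < 0 := by nlinarith
      have hc : 0 < Real.cos φ + Real.sin φ := by nlinarith
      -- φ > π
      have hφπ : π < φ := by
        by_contra hle
        push_neg at hle
        exact absurd (Real.sin_nonneg_of_nonneg_of_le_pi (le_of_lt hφ1) hle) (not_le.2 hs)
      -- φ ≥ 3π/2
      have hφ32 : 3 * π / 2 ≤ φ := by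
        by_contra hlt
        push_neg at hlt
        have hsum : Real.sin (φ + π / 4) =
            Real.sqrt 2 / 2 * (Real.sin φ + Real.cos φ) := by
          rw [Real.sin_add, Real.cos_pi_div_four, Real.sin_pi_div_four]; ring
        have hpos : 0 < Real.sin (φ + π / 4) := by
          rw [hsum]; nlinarith [sqrt2_pos]
        have hneg : Real.sin (φ + π / 4) < 0 := by
          rw [← neg_neg (Real.sin (φ + π / 4)), ← Real.sin_sub_pi]
          have := Real.sin_pos_of_pos_of_lt_pi
            (x := φ + π / 4 - π) (by linarith) (by linarith)
          linarith
        linarith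
      simp only [Set.mem_setOf_eq]
      exact le_of_lt (hw3 hφ32).1
    · exact Or.inl hcase

lemma FF_subset_UU : FF ⊆ UU := by
  rintro p ((⟨h1, h2⟩ | ⟨h1, h2 | h2⟩) | ⟨⟨h1, h2⟩, h3⟩)
  · exact Or.inl (Or.inl (Or.inl ⟨by simp only [Set.mem_setOf_eq] at h2 ⊢; linarith,
      by simp only [Set.mem_setOf_eq] at h1 ⊢; linarith⟩))
  · exact Or.inl (Or.inl (Or.inr (by simp only [Set.mem_setOf_eq, V2] at h2 ⊢; linarith)))
  · exact Or.inl (Or.inr (by simp only [Set.mem_setOf_eq, V3] at h2 ⊢; linarith))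
  · exact Or.inr ⟨by simp only [Set.mem_setOf_eq] at h3 ⊢; linarith,
      by simp only [Set.mem_setOf_eq] at h1 ⊢; linarith⟩


lemma log_ofReal_mul_ce {x t : ℝ} (hx : 0 < x) (h1 : -π < t) (h2 : t ≤ π) :
    Complex.log ((x : ℂ) * ce t) = ((Real.log x : ℝ) : ℂ) + (t : ℂ) * Complex.I := by
  have hxe : (x : ℂ) = Complex.exp ((Real.log x : ℝ) : ℂ) := by
    rw [← Complex.ofReal_exp, Real.exp_log hx]
  rw [hxe, ce, ← Complex.exp_add, Complex.log_exp] <;> simp [h1, h2]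

lemma hh_on_I_small {x : ℝ} (hx : 0 < x) {w : ℂ} (hw : ‖w‖ ≤ 1) :
    hh ((x : ℂ), w) = Complex.exp (Complex.I * ((Real.log x : ℝ) : ℂ)) := by
  have hπ := Real.pi_pos
  have hC : Cnd ((x : ℂ), w) := by
    refine Or.inr ⟨?_, by simpa using lt_of_le_of_lt hw (by norm_num)⟩
    simp only [idA, Complex.ofReal_re, Complex.ofReal_im, add_zero]
    nlinarith [sqrt2_pos]
  rw [hh, if_pos hC]
  have hfa : fA ((x : ℂ)) = ((Real.log x : ℝ) : ℂ) := by
    rw [fA, log_ofReal_mul_ce hx (by linarith) (by linarith)]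
    push_cast
    ring
  rw [hfa]

lemma hh_on_I_big {x : ℝ} (hx : 0 < x) {w : ℂ} (hw : 2 ≤ ‖w‖) :
    hh ((x : ℂ), w) =
      Complex.exp (((-(2 * π) : ℝ) : ℂ) + Complex.I * ((Real.log x : ℝ) : ℂ)) := by
  have hπ := Real.pi_pos
  have hC : ¬ Cnd ((x : ℂ), w) := by
    rintro (h | ⟨h1, h2⟩)
    · simp only [idC, Complex.ofReal_re, Complex.ofReal_im, zero_sub] at h
      nlinarith [sqrt2_pos]
    · simp only at h2
      linarith
  rw [hh, if_neg hC]
  have hfb : fB ((x : ℂ)) = ((Real.log x : ℝ) : ℂ) + ((2 * π : ℝ) : ℂ) * Complex.I := by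
    rw [fB, log_ofReal_mul_ce hx (by linarith) (by linarith)]
    push_cast
    ring
  rw [hfb]
  congr 1
  push_cast
  linear_combination (2 * (π : ℂ)) * Complex.I_mul_I

lemma diffAt_gA {q : ℂ × ℂ} (hq : q.1 * ce (-(π / 4)) ∈ Complex.slitPlane) :
    DifferentiableAt ℂ (fun p : ℂ × ℂ => Complex.exp (Complex.I * fA p.1)) q := by
  have h1 : DifferentiableAt ℂ fA q.1 := (fA_hasDerivAt hq).differentiableAt
  exact ((h1.comp q differentiableAt_fst).const_mul Complex.I).cexp

lemma diffAt_gB {q : ℂ × ℂ} (hq : q.1 * ce (π / 4) ∈ Complex.slitPlane) :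
    DifferentiableAt ℂ (fun p : ℂ × ℂ => Complex.exp (Complex.I * fB p.1)) q := by
  have h1 : DifferentiableAt ℂ fB q.1 := (fB_hasDerivAt hq).differentiableAt
  exact ((h1.comp q differentiableAt_fst).const_mul Complex.I).cexp

lemma isOpen_V1 : IsOpen V1 :=
  (isOpen_lt continuous_const (cont_re _)).inter (isOpen_lt cont_abs2 continuous_const)
lemma isOpen_V2 : IsOpen V2 := isOpen_lt continuous_const (cont_re _)
lemma isOpen_V3 : IsOpen V3 := isOpen_lt continuous_const (cont_re _)
lemma isOpen_V4 : IsOpen V4 :=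
  (isOpen_lt continuous_const (cont_re _)).inter (isOpen_lt continuous_const cont_abs2)

lemma hh_diffOn : DifferentiableOn ℂ hh UU := by
  intro q hq
  have key : DifferentiableAt ℂ hh q := by
    rcases hq with ((hq1 | hq2) | hq3) | hq4
    · have heq : Set.EqOn hh (fun p => Complex.exp (Complex.I * fA p.1)) V1 := by
        intro p hp
        rw [hh, if_pos (show Cnd p from Or.inr ⟨hp.1, hp.2⟩)]
      exact (diffAt_gA (slitA' hq1.1)).congr_of_eventuallyEq
        (Filter.eventuallyEq_of_mem (isOpen_V1.mem_nhds hq1) heq)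
    · have heq : Set.EqOn hh (fun p => Complex.exp (Complex.I * fA p.1)) V2 := by
        intro p hp
        rw [hh, if_pos (show Cnd p from Or.inl hp)]
      exact (diffAt_gA (slitA hq2)).congr_of_eventuallyEq
        (Filter.eventuallyEq_of_mem (isOpen_V2.mem_nhds hq2) heq)
    · have heq : Set.EqOn hh (fun p => Complex.exp (Complex.I * fB p.1)) V3 := by
        intro p hp
        by_cases hc : Cnd p
        · rw [hh, if_pos hc]
          rcases hc with h2 | ⟨h1, _⟩
          · rw [fAB h2 hp]
          · exfalso
            rw [idA] at h1
            have hp' : (0:ℝ) < -(Real.sqrt 2 / 2) * (p.1.re + p.1.im) := by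
              rw [← idD]; exact hp
            nlinarith [sqrt2_pos]
        · rw [hh, if_neg hc]
      exact (diffAt_gB (slitB hq3)).congr_of_eventuallyEq
        (Filter.eventuallyEq_of_mem (isOpen_V3.mem_nhds hq3) heq)
    · have heq : Set.EqOn hh (fun p => Complex.exp (Complex.I * fB p.1)) V4 := by
        intro p hp
        have hc : ¬ Cnd p := by
          rintro (h | ⟨h1, h2⟩)
          · rw [idC] at h
            have hp' : (0:ℝ) < Real.sqrt 2 / 2 * (p.1.re - p.1.im) := by
              rw [← idE]; exact hp.1
            nlinarith [sqrt2_pos]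
          · have := hp.2
            simp only [Set.mem_setOf_eq] at this h2
            linarith
        rw [hh, if_neg hc]
      exact (diffAt_gB (slitB' hq4.1)).congr_of_eventuallyEq
        (Filter.eventuallyEq_of_mem (isOpen_V4.mem_nhds hq4) heq)
  exact key.differentiableWithinAt

lemma arg_gt {u : ℂ} (hne : u ≠ 0) (h : 0 < u.im + u.re) : -(π / 4) < Complex.arg u := by
  by_contra hle
  push_neg at hle
  have hsin := Complex.sin_arg u
  have hcos := Complex.cos_arg hne
  have habs : 0 < ‖u‖ := norm_pos_iff.mpr hne
  have hπ := Real.pi_pos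
  have hsum : Real.sin (Complex.arg u + π / 4) =
      Real.sqrt 2 / 2 * (Real.sin (Complex.arg u) + Real.cos (Complex.arg u)) := by
    rw [Real.sin_add, Real.cos_pi_div_four, Real.sin_pi_div_four]; ring
  have h1 : Real.sin (Complex.arg u + π / 4) ≤ 0 :=
    Real.sin_nonpos_of_nonpos_of_neg_pi_le (by linarith)
      (by linarith [Complex.neg_pi_lt_arg u])
  have h2 : 0 < Real.sin (Complex.arg u) + Real.cos (Complex.arg u) := by
    rw [hsin, hcos, ← add_div]
    exact div_pos h habs
  nlinarith [sqrt2_pos]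

lemma abs_hh_lt {p : ℂ × ℂ} (hG : p ∈ GG)
    (hnI : ¬ ∃ x : ℝ, x ∈ Set.Icc (1 / 2 : ℝ) 1 ∧ p.1 = (x : ℂ)) :
    ‖hh p‖ < 1 := by
  have hπ := Real.pi_pos
  obtain ⟨⟨ha1, ha2⟩, hor⟩ := hG
  simp only [Set.mem_setOf_eq] at ha1 ha2
  by_cases hc : Cnd p
  · rw [hh, if_pos hc, Complex.norm_exp, Real.exp_lt_one_iff]
    have him_fA : (fA p.1).im = Complex.arg (p.1 * ce (-(π / 4))) + π / 4 := by
      simp [fA, Complex.add_im, Complex.log_im]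
    have hre : (Complex.I * fA p.1).re = -((fA p.1).im) := by
      simp [Complex.mul_re]
    rw [hre, him_fA]
    have hargu : -(π / 4) < Complex.arg (p.1 * ce (-(π / 4))) := by
      rcases hc with h2 | ⟨h1, hw⟩
      · have him : 0 < (p.1 * ce (-(π / 4))).im := by
          rw [idB, ← idC]; exact h2
        have h0 : 0 ≤ Complex.arg (p.1 * ce (-(π / 4))) := Complex.arg_nonneg_iff.2 him.le
        linarith
      · have hz0 : p.1 ≠ 0 := ne_zero_of_re_pos h1
        have hu0 : p.1 * ce (-(π / 4)) ≠ 0 := mul_ne_zero hz0 (ce_ne _)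
        have hre_im : 0 < p.1.re + p.1.im := by
          rw [idA] at h1; nlinarith [sqrt2_pos]
        have him : 0 < p.1.im := by
          rcases hor with hno | hwge
          · simp only [Set.mem_compl_iff, Set.mem_setOf_eq, not_and, not_lt] at hno
            have him0 : 0 ≤ p.1.im := by
              by_contra hlt
              push_neg at hlt
              exact absurd hre_im (not_lt.2 (hno hlt))
            rcases eq_or_lt_of_le him0 with heq | hgt
            · exfalso
              apply hnI
              have him00 : p.1.im = 0 := heq.symm
              have hre0 : 0 < p.1.re := by
                have h' := hre_im
                rw [him00, add_zero] at h'
                exact h'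
              have hp1 : p.1 = ((p.1.re : ℝ) : ℂ) := by
                rw [Complex.ext_iff, Complex.ofReal_re, Complex.ofReal_im]
                exact ⟨rfl, him00⟩
              have habs : ‖p.1‖ = p.1.re := by
                conv_lhs => rw [hp1]
                rw [Complex.norm_real, Real.norm_eq_abs, _root_.abs_of_nonneg hre0.le]
              exact ⟨p.1.re, ⟨by rw [habs] at ha1; exact ha1,
                by rw [habs] at ha2; exact ha2⟩, hp1⟩
            · exact hgt
          · simp only [Set.mem_setOf_eq] at hwge
            linarith
        apply arg_gt hu0
        rw [idA, idB]
        nlinarith [sqrt2_pos]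
    linarith
  · rw [hh, if_neg hc, Complex.norm_exp, Real.exp_lt_one_iff]
    have him_fB : (fB p.1).im = Complex.arg (p.1 * ce (π / 4)) + 7 * π / 4 := by
      simp [fB, Complex.add_im, Complex.log_im]
    have hre : (Complex.I * fB p.1).re = -((fB p.1).im) := by
      simp [Complex.mul_re]
    rw [hre, him_fB]
    linarith [Complex.neg_pi_lt_arg (p.1 * ce (π / 4))]

end Stmt4Aux


theorem stmt4 :
    ∃ (h : ℂ × ℂ → ℂ) (U : Set (ℂ × ℂ)), IsOpen U ∧ closure domD ⊆ U ∧
      DifferentiableOn ℂ h U ∧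
      (∀ x ∈ Icc (1 / 2 : ℝ) 1, ∀ w : ℂ, ‖w‖ ≤ 1 →
        h ((x : ℂ), w) = Complex.exp (Complex.I * (Real.log x : ℂ))) ∧
      (∀ x ∈ Icc (1 / 2 : ℝ) 1, ∀ w : ℂ, 2 ≤ ‖w‖ → ‖w‖ ≤ 3 →
        h ((x : ℂ), w) = Complex.exp ((-(2 * Real.pi) : ℝ) + Complex.I * (Real.log x : ℂ))) ∧
      (∀ p ∈ closure domD, (¬ ∃ x : ℝ, x ∈ Icc (1 / 2 : ℝ) 1 ∧ p.1 = (x : ℂ)) →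
        ‖h p‖ < 1) := by
  refine ⟨Stmt4Aux.hh, Stmt4Aux.UU, Stmt4Aux.isOpen_UU, ?_, Stmt4Aux.hh_diffOn, ?_, ?_, ?_⟩
  · exact (closure_minimal Stmt4Aux.domD_subset_FF Stmt4Aux.isClosed_FF).trans
      Stmt4Aux.FF_subset_UU
  · intro x hx w hw
    exact Stmt4Aux.hh_on_I_small (by linarith [hx.1]) hw
  · intro x hx w hw2 hw3
    exact Stmt4Aux.hh_on_I_big (by linarith [hx.1]) hw2
  · intro p hp hnI
    exact Stmt4Aux.abs_hh_lt (closure_minimal Stmt4Aux.domD_subset_GG Stmt4Aux.isClosed_GG hp)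
      hnI
end
end

section
/- There exists a function h holomorphic on an open neighborhood of cl D such that for every a ∈ I = [1/2, 1] there is no function F holomorphic on 𝔻(3) = {w ∈ ℂ : |w| < 3} with F(w) = h(a, w) for all w with |w| < 1 and F(w) = h(a, w) for all w with 2 < |w| < 3. (In particular, functions extending holomorphically past cl D need not extend to the envelope of holomorphy of D as continuous functions.) -/
open Set Complex

noncomputable section

def cc1 : ℂ := Complex.exp ((↑(-(3 * Real.pi / 4)) : ℂ) * Complex.I)
def cc2 : ℂ := Complex.exp ((↑(3 * Real.pi / 4) : ℂ) * Complex.I)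

def ff1 (z : ℂ) : ℂ := Complex.log (z * cc1) + (↑(3 * Real.pi / 4) : ℂ) * Complex.I
def ff2 (z : ℂ) : ℂ := Complex.log (z * cc2) + (↑(5 * Real.pi / 4) : ℂ) * Complex.I

def Om1 : Set ℂ := {z : ℂ | z.im = -z.re ∧ 0 ≤ z.re}ᶜ
def Om2 : Set ℂ := {z : ℂ | z.im = z.re ∧ 0 ≤ z.re}ᶜ
def Bsec : Set ℂ := {z : ℂ | z.re < |z.im|}

lemma sqrt2_pos : (0:ℝ) < Real.sqrt 2 / 2 := by positivity

lemma cos34 : Real.cos (3 * Real.pi / 4) = -(Real.sqrt 2 / 2) := by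
  have : (3 * Real.pi / 4) = Real.pi - Real.pi / 4 := by ring
  rw [this, Real.cos_pi_sub, Real.cos_pi_div_four]

lemma sin34 : Real.sin (3 * Real.pi / 4) = Real.sqrt 2 / 2 := by
  have : (3 * Real.pi / 4) = Real.pi - Real.pi / 4 := by ring
  rw [this, Real.sin_pi_sub, Real.sin_pi_div_four]

lemma cc1_re : cc1.re = -(Real.sqrt 2 / 2) := by
  rw [show cc1 = Complex.exp ((↑(-(3 * Real.pi / 4)) : ℝ) * Complex.I) from rfl,
    Complex.exp_ofReal_mul_I_re, Real.cos_neg, cos34]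

lemma cc1_im : cc1.im = -(Real.sqrt 2 / 2) := by
  rw [show cc1 = Complex.exp ((↑(-(3 * Real.pi / 4)) : ℝ) * Complex.I) from rfl,
    Complex.exp_ofReal_mul_I_im, Real.sin_neg, sin34]

lemma cc2_re : cc2.re = -(Real.sqrt 2 / 2) := by
  rw [show cc2 = Complex.exp ((↑(3 * Real.pi / 4) : ℝ) * Complex.I) from rfl,
    Complex.exp_ofReal_mul_I_re, cos34]

lemma cc2_im : cc2.im = Real.sqrt 2 / 2 := by
  rw [show cc2 = Complex.exp ((↑(3 * Real.pi / 4) : ℝ) * Complex.I) from rfl,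
    Complex.exp_ofReal_mul_I_im, sin34]

lemma slit1 {z : ℂ} (hz : z ∈ Om1) : z * cc1 ∈ Complex.slitPlane := by
  rw [Complex.mem_slitPlane_iff]
  set s := Real.sqrt 2 / 2 with hs
  have hsp := sqrt2_pos
  by_contra hcon
  push_neg at hcon
  obtain ⟨h1, h2⟩ := hcon
  apply hz
  rw [Complex.mul_re, cc1_re, cc1_im] at h1
  rw [Complex.mul_im, cc1_re, cc1_im] at h2
  constructor
  · nlinarith [h2]
  · nlinarith [h1, h2]

lemma slit2 {z : ℂ} (hz : z ∈ Om2) : z * cc2 ∈ Complex.slitPlane := by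
  rw [Complex.mem_slitPlane_iff]
  set s := Real.sqrt 2 / 2 with hs
  have hsp := sqrt2_pos
  by_contra hcon
  push_neg at hcon
  obtain ⟨h1, h2⟩ := hcon
  apply hz
  rw [Complex.mul_re, cc2_re, cc2_im] at h1
  rw [Complex.mul_im, cc2_re, cc2_im] at h2
  constructor
  · nlinarith [h2]
  · nlinarith [h1, h2]

lemma diff1 {z : ℂ} (hz : z ∈ Om1) : DifferentiableAt ℂ ff1 z := by
  have : DifferentiableAt ℂ (fun z => Complex.log (z * cc1)) z :=
    (Complex.differentiableAt_log (slit1 hz)).comp z (differentiableAt_id.mul_const cc1)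
  exact this.add_const _

lemma diff2 {z : ℂ} (hz : z ∈ Om2) : DifferentiableAt ℂ ff2 z := by
  have : DifferentiableAt ℂ (fun z => Complex.log (z * cc2)) z :=
    (Complex.differentiableAt_log (slit2 hz)).comp z (differentiableAt_id.mul_const cc2)
  exact this.add_const _

lemma Bsub1 : Bsec ⊆ Om1 := by
  intro z hz
  simp only [Om1, mem_compl_iff, mem_setOf_eq, not_and] at *
  intro h1 h2
  have : |z.im| = z.re := by rw [h1, abs_neg, _root_.abs_of_nonneg h2]
  have hz' : z.re < |z.im| := hz
  rw [this] at hz'; exact lt_irrefl _ hz'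

lemma Bsub2 : Bsec ⊆ Om2 := by
  intro z hz
  simp only [Om2, mem_compl_iff, mem_setOf_eq, not_and] at *
  intro h1 h2
  have : |z.im| = z.re := by rw [h1, _root_.abs_of_nonneg h2]
  have hz' : z.re < |z.im| := hz
  rw [this] at hz'; exact lt_irrefl _ hz'

lemma glue {z : ℂ} (hz : z ∈ Bsec) : ff1 z = ff2 z := by
  have hsp := sqrt2_pos
  have hz0 : z ≠ 0 := by
    intro h; rw [h] at hz; simp [Bsec] at hz
  have hc2ne : cc2 ≠ 0 := Complex.exp_ne_zero _
  have hu : z * cc2 ≠ 0 := mul_ne_zero hz0 hc2ne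
  have key : z * cc1 = Complex.I * (z * cc2) := by
    have : Complex.I * cc2 = cc1 := by
      have hI : Complex.I = Complex.exp ((↑(Real.pi/2) : ℂ) * Complex.I) := by
        rw [Complex.exp_mul_I, ← Complex.ofReal_cos, ← Complex.ofReal_sin,
          Real.cos_pi_div_two, Real.sin_pi_div_two]
        simp
      rw [hI, cc2, cc1, ← Complex.exp_add]
      have h2pi : (↑(Real.pi/2) : ℂ) * Complex.I + (↑(3 * Real.pi / 4) : ℂ) * Complex.I
          = (↑(-(3 * Real.pi / 4)) : ℂ) * Complex.I + 2 * Real.pi * Complex.I := by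
        push_cast; ring
      rw [h2pi, Complex.exp_add, Complex.exp_two_pi_mul_I, mul_one]
    rw [← this]; ring
  have hargle : (z * cc2).arg ≤ Real.pi / 2 := by
    rw [Complex.arg_le_pi_div_two_iff]
    rw [Complex.mul_re, Complex.mul_im, cc2_re, cc2_im]
    simp only [Bsec, mem_setOf_eq] at hz
    rcases le_or_gt 0 z.im with h | h
    · right; nlinarith [_root_.abs_of_nonneg h, hz]
    · left; nlinarith [abs_of_neg h, hz]
  have hlog : Complex.log (Complex.I * (z * cc2)) = Complex.log Complex.I + Complex.log (z * cc2) := by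
    apply Complex.log_mul Complex.I_ne_zero hu
    rw [Complex.arg_I]
    constructor
    · have := Complex.neg_pi_lt_arg (z * cc2)
      have hπ := Real.pi_pos
      linarith
    · linarith
  rw [ff1, ff2, key, hlog, Complex.log_I]
  push_cast
  ring

lemma ff1_val {a : ℝ} (ha : 0 < a) : ff1 (a : ℂ) = (Real.log a : ℂ) := by
  have h1 : (a : ℂ) = Complex.exp ((Real.log a : ℂ)) := by
    rw [← Complex.ofReal_exp, Real.exp_log ha]
  rw [ff1, cc1, h1, ← Complex.exp_add]
  rw [Complex.log_exp]
  · push_cast; ring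
  · simp only [Complex.add_im, Complex.ofReal_im, Complex.mul_im, Complex.ofReal_re,
      Complex.I_im, Complex.I_re, mul_zero, mul_one, zero_add]
    have hπ := Real.pi_pos
    nlinarith
  · simp only [Complex.add_im, Complex.ofReal_im, Complex.mul_im, Complex.ofReal_re,
      Complex.I_im, Complex.I_re, mul_zero, mul_one, zero_add]
    have hπ := Real.pi_pos
    nlinarith

lemma ff2_val {a : ℝ} (ha : 0 < a) :
    ff2 (a : ℂ) = (Real.log a : ℂ) + 2 * Real.pi * Complex.I := by
  have h1 : (a : ℂ) = Complex.exp ((Real.log a : ℂ)) := by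
    rw [← Complex.ofReal_exp, Real.exp_log ha]
  rw [ff2, cc2, h1, ← Complex.exp_add]
  rw [Complex.log_exp]
  · push_cast; ring
  · simp only [Complex.add_im, Complex.ofReal_im, Complex.mul_im, Complex.ofReal_re,
      Complex.I_im, Complex.I_re, mul_zero, mul_one, zero_add]
    have hπ := Real.pi_pos
    nlinarith
  · simp only [Complex.add_im, Complex.ofReal_im, Complex.mul_im, Complex.ofReal_re,
      Complex.I_im, Complex.I_re, mul_zero, mul_one, zero_add]
    have hπ := Real.pi_pos
    nlinarith

def hfun (p : ℂ × ℂ) : ℂ := if ‖p.2‖ < 7/5 then ff1 p.1 else ff2 p.1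

def Uset : Set (ℂ × ℂ) :=
  (Om1 ×ˢ {w : ℂ | ‖w‖ < 7/5}) ∪ (Om2 ×ˢ {w : ℂ | 7/5 < ‖w‖}) ∪
    (Bsec ×ˢ (univ : Set ℂ))

lemma om1_open : IsOpen Om1 :=
  ((isClosed_eq continuous_im continuous_re.neg).inter
    (isClosed_le continuous_const continuous_re)).isOpen_compl

lemma om2_open : IsOpen Om2 :=
  ((isClosed_eq continuous_im continuous_re).inter
    (isClosed_le continuous_const continuous_re)).isOpen_compl

lemma bsec_open : IsOpen Bsec :=
  isOpen_lt continuous_re continuous_im.abs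

lemma uset_open : IsOpen Uset := by
  refine IsOpen.union (IsOpen.union ?_ ?_) ?_
  · exact om1_open.prod (isOpen_lt continuous_norm continuous_const)
  · exact om2_open.prod (isOpen_lt continuous_const continuous_norm)
  · exact bsec_open.prod isOpen_univ

lemma hfun_diff : DifferentiableOn ℂ hfun Uset := by
  intro p hp
  apply DifferentiableAt.differentiableWithinAt
  rcases hp with (hp | hp) | hp
  · -- inner piece
    have hev : hfun =ᶠ[nhds p] (fun q => ff1 q.1) := by
      filter_upwards [(om1_open.prod (isOpen_lt continuous_norm continuous_const)).mem_nhds hp]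
        with q hq
      exact if_pos hq.2
    rw [Filter.EventuallyEq.differentiableAt_iff hev]
    exact (diff1 hp.1).comp p differentiableAt_fst
  · have hev : hfun =ᶠ[nhds p] (fun q => ff2 q.1) := by
      filter_upwards [(om2_open.prod (isOpen_lt continuous_const continuous_norm)).mem_nhds hp]
        with q hq
      exact if_neg (not_lt.2 hq.2.le)
    rw [Filter.EventuallyEq.differentiableAt_iff hev]
    exact (diff2 hp.1).comp p differentiableAt_fst
  · have hev : hfun =ᶠ[nhds p] (fun q => ff1 q.1) := by
      filter_upwards [(bsec_open.prod isOpen_univ).mem_nhds hp] with q hq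
      by_cases h : ‖q.2‖ < 7/5
      · exact if_pos h
      · rw [hfun, if_neg h]; exact (glue hq.1).symm
    rw [Filter.EventuallyEq.differentiableAt_iff hev]
    exact (diff1 (Bsub1 hp.1)).comp p differentiableAt_fst

def C1 : Set (ℂ × ℂ) := {p | 0 ≤ p.1.re ∧ 0 ≤ p.1.im ∧ 1/2 ≤ ‖p.1‖ ∧ ‖p.2‖ ≤ 1}
def C2 : Set (ℂ × ℂ) := {p | p.1.re ≤ 0 ∧ 1/2 ≤ ‖p.1‖ ∧ ‖p.2‖ ≤ 3}
def C3 : Set (ℂ × ℂ) := {p | 0 ≤ p.1.re ∧ p.1.im ≤ 0 ∧ 1/2 ≤ ‖p.1‖ ∧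
    2 ≤ ‖p.2‖ ∧ ‖p.2‖ ≤ 3}

lemma cset_closed : IsClosed (C1 ∪ C2 ∪ C3) := by
  have hre : Continuous fun p : ℂ × ℂ => p.1.re := continuous_re.comp continuous_fst
  have him : Continuous fun p : ℂ × ℂ => p.1.im := continuous_im.comp continuous_fst
  have ha1 : Continuous fun p : ℂ × ℂ => ‖p.1‖ := continuous_norm.comp continuous_fst
  have ha2 : Continuous fun p : ℂ × ℂ => ‖p.2‖ := continuous_norm.comp continuous_snd
  refine IsClosed.union (IsClosed.union ?_ ?_) ?_
  · exact (isClosed_le continuous_const hre).inter ((isClosed_le continuous_const him).inter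
      ((isClosed_le continuous_const ha1).inter (isClosed_le ha2 continuous_const)))
  · exact (isClosed_le hre continuous_const).inter
      ((isClosed_le continuous_const ha1).inter (isClosed_le ha2 continuous_const))
  · exact (isClosed_le continuous_const hre).inter ((isClosed_le him continuous_const).inter
      ((isClosed_le continuous_const ha1).inter
        ((isClosed_le continuous_const ha2).inter (isClosed_le ha2 continuous_const))))

lemma domD_sub_C : domD ⊆ C1 ∪ C2 ∪ C3 := by
  rintro ⟨z, w⟩ ⟨r, φ, hr1, hr2, hφ1, hφ2, hz, hw1, hw2, hw3⟩
  have hrpos : 0 < r := by linarith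
  have hz' : z = (r : ℂ) * Complex.exp (↑φ * Complex.I) := hz
  have hre : z.re = r * Real.cos φ := by
    rw [hz', Complex.exp_mul_I, ← Complex.ofReal_cos, ← Complex.ofReal_sin]
    simp [Complex.mul_re, Complex.mul_im, Complex.add_re, Complex.add_im, Complex.cos_ofReal_re, Complex.sin_ofReal_re]
  have him : z.im = r * Real.sin φ := by
    rw [hz', Complex.exp_mul_I, ← Complex.ofReal_cos, ← Complex.ofReal_sin]
    simp [Complex.mul_re, Complex.mul_im, Complex.add_re, Complex.add_im, Complex.cos_ofReal_re, Complex.sin_ofReal_re]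
  have habs : ‖z‖ = r := by
    rw [hz', norm_mul, Complex.norm_exp_ofReal_mul_I, mul_one, Complex.norm_real, Real.norm_eq_abs,
      abs_of_pos hrpos]
  have hπ := Real.pi_pos
  rcases le_or_gt φ (Real.pi/2) with h1 | h1
  · left; left
    refine ⟨?_, ?_, by rw [habs]; linarith, le_of_lt (hw1 h1)⟩
    · rw [hre]
      exact mul_nonneg hrpos.le (Real.cos_nonneg_of_mem_Icc ⟨by linarith, h1⟩)
    · rw [him]
      exact mul_nonneg hrpos.le (Real.sin_nonneg_of_nonneg_of_le_pi (by linarith) (by linarith))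
  · rcases lt_or_ge φ (3 * Real.pi / 2) with h2 | h2
    · left; right
      refine ⟨?_, by rw [habs]; linarith, le_of_lt (hw2 h1 h2)⟩
      rw [hre]
      have : Real.cos φ ≤ 0 :=
        Real.cos_nonpos_of_pi_div_two_le_of_le h1.le (by linarith)
      nlinarith
    · right
      obtain ⟨hwa, hwb⟩ := hw3 h2
      refine ⟨?_, ?_, by rw [habs]; linarith, hwa.le, hwb.le⟩
      · rw [hre, ← Real.cos_sub_two_pi]
        exact mul_nonneg hrpos.le (Real.cos_nonneg_of_mem_Icc ⟨by linarith, by linarith⟩)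
      · rw [him, ← Real.sin_sub_two_pi]
        have : Real.sin (φ - 2 * Real.pi) ≤ 0 :=
          Real.sin_nonpos_of_nonpos_of_neg_pi_le (by linarith) (by linarith)
        nlinarith

lemma C_sub_U : C1 ∪ C2 ∪ C3 ⊆ Uset := by
  rintro ⟨z, w⟩ ((⟨h1, h2, h3, h4⟩ | ⟨h1, h2, h3⟩) | ⟨h1, h2, h3, h4, h5⟩)
  · left; left
    refine ⟨?_, by simpa using lt_of_le_of_lt h4 (by norm_num)⟩
    rintro ⟨ha, hb⟩
    have hz0 : z.im = 0 := le_antisymm (by rw [ha]; linarith) h2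
    have hz1 : z.re = 0 := by rw [ha] at hz0; linarith
    have : z = 0 := Complex.ext (by simpa using hz1) (by simpa using hz0)
    rw [this] at h3; simp at h3; linarith
  · right
    refine ⟨?_, trivial⟩
    rcases lt_or_eq_of_le h1 with h | h
    · exact lt_of_lt_of_le h (abs_nonneg _)
    · show z.re < |z.im|
      rw [h]
      rcases eq_or_ne z.im 0 with h0 | h0
      · exfalso
        have : z = 0 := Complex.ext (by simpa using h) (by simpa using h0)
        rw [this] at h2; simp at h2; linarith
      · simpa using abs_pos.2 h0
  · left; right
    refine ⟨?_, by show (7:ℝ)/5 < ‖w‖; linarith⟩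
    rintro ⟨ha, hb⟩
    have hz0 : z.im = 0 := le_antisymm h2 (by rw [ha]; linarith)
    have hz1 : z.re = 0 := by rw [ha] at hz0; linarith
    have : z = 0 := Complex.ext (by simpa using hz1) (by simpa using hz0)
    rw [this] at h3; simp at h3; linarith

lemma closure_sub : closure domD ⊆ Uset :=
  (closure_minimal domD_sub_C cset_closed).trans C_sub_U


theorem stmt5 :
    ∃ h : ℂ × ℂ → ℂ, h ∈ Ocl domD ∧
      ∀ a ∈ Icc (1 / 2 : ℝ) 1,
        ¬ ∃ F : ℂ → ℂ, DifferentiableOn ℂ F {w : ℂ | ‖w‖ < 3} ∧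
          (∀ w : ℂ, ‖w‖ < 1 → F w = h ((a : ℂ), w)) ∧
          (∀ w : ℂ, 2 < ‖w‖ → ‖w‖ < 3 → F w = h ((a : ℂ), w)) := by
  refine ⟨hfun, ⟨Uset, uset_open, closure_sub, hfun_diff⟩, ?_⟩
  rintro a ⟨ha1, ha2⟩ ⟨F, hF, hin, hout⟩
  have hapos : (0:ℝ) < a := by linarith
  have hopen : IsOpen {w : ℂ | ‖w‖ < 3} :=
    isOpen_lt continuous_norm continuous_const
  have hFa : AnalyticOnNhd ℂ F {w : ℂ | ‖w‖ < 3} := hF.analyticOnNhd hopen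
  have hGa : AnalyticOnNhd ℂ (fun _ : ℂ => (Real.log a : ℂ)) {w : ℂ | ‖w‖ < 3} :=
    analyticOnNhd_const
  have hball : {w : ℂ | ‖w‖ < 3} = Metric.ball (0:ℂ) 3 := by
    ext w; simp [Metric.mem_ball, Complex.dist_eq]
  have hpre : IsPreconnected {w : ℂ | ‖w‖ < 3} := by
    rw [hball]; exact (convex_ball (0:ℂ) 3).isPreconnected
  have h0mem : (0:ℂ) ∈ {w : ℂ | ‖w‖ < 3} := by simp
  have hev : F =ᶠ[nhds (0:ℂ)] fun _ => (Real.log a : ℂ) := by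
    have : Metric.ball (0:ℂ) 1 ∈ nhds (0:ℂ) := Metric.ball_mem_nhds _ one_pos
    filter_upwards [this] with w hw
    have habs : ‖w‖ < 1 := by
      simpa [Complex.dist_eq] using hw
    rw [hin w habs, hfun, if_pos (by simpa using lt_trans habs (by norm_num))]
    exact ff1_val hapos
  have heq := hFa.eqOn_of_preconnected_of_eventuallyEq hGa hpre h0mem hev
  have hw0 : ‖((5/2 : ℝ) : ℂ)‖ = 5/2 := by
    rw [Complex.norm_real]; norm_num
  have h1 := hout ((5/2 : ℝ) : ℂ) (by rw [hw0]; norm_num) (by rw [hw0]; norm_num)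
  have h2 : F ((5/2 : ℝ) : ℂ) = (Real.log a : ℂ) :=
    heq (by rw [mem_setOf_eq, hw0]; norm_num)
  rw [h2, hfun, if_neg (by rw [hw0]; norm_num)] at h1
  have h1' : (Real.log a : ℂ) = (Real.log a : ℂ) + 2 * Real.pi * Complex.I := by
    exact h1.trans (ff2_val hapos)
  have h3 := congrArg Complex.im h1'
  simp at h3
end
end
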